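/- Assume μ and σ satisfy (μ1),(μ2),(σ1),(σ2). Put ξ = (ξ₁,…,ξ_k), define α = (α₁,…,α_k) by α_i = (μ(ξ_i−) − μ(ξ_i+))/(2σ²(ξ_i)) for i ∈ {1,…,k}, let ν ∈ (0,ρ_{ξ,α}), and extend G″_{ξ,α,ν} to ℝ by setting G″_{ξ,α,ν}(ξ_i) = 2α_i + 2(μ(ξ_i+) − μ(ξ_i))/σ²(ξ_i) for i ∈ {1,…,k}. Then the functions μ̃ = (G′_{ξ,α,ν}·μ + ½G″_{ξ,α,ν}·σ²)∘G_{ξ,α,ν}^{−1} and σ̃ = (G′_{ξ,α,ν}·σ)∘G_{ξ,α,ν}^{−1} satisfy the assumptions (μ1),(μ2) and (σ1),(σ2), respectively, and μ̃ is continuous on ℝ. (Lemma 4.2.) -/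

import Mathlib

open MeasureTheory ProbabilityTheory Filter Set
open scoped ENNReal NNReal

noncomputable section

namespace AdaptiveQM

/-- The open interval `(ξ_{i-1}, ξ_i)` (with `ξ₀ = -∞`, `ξ_{k+1} = ∞`) determined by the
strictly increasing family `ξ : Fin k → ℝ`. -/
def piece {k : ℕ} (ξ : Fin k → ℝ) (i : Fin (k + 1)) : Set ℝ :=
  {x | (∀ j : Fin k, (j : ℕ) < (i : ℕ) → ξ j < x) ∧ ∀ j : Fin k, (i : ℕ) ≤ (j : ℕ) → x < ξ j}

/-- Assumption (μ1)/(σ piecewise Lipschitz): Lipschitz continuity on each interval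
`(ξ_{i-1}, ξ_i)`. -/
def PiecewiseLipschitz {k : ℕ} (ξ : Fin k → ℝ) (f : ℝ → ℝ) : Prop :=
  ∀ i : Fin (k + 1), ∃ L : ℝ≥0, LipschitzOnWith L f (piece ξ i)

/-- Assumptions (μ2)/(σ2): `f` has a Lipschitz continuous derivative on each interval
`(ξ_{i-1}, ξ_i)`. -/
def PiecewiseC1Lipschitz {k : ℕ} (ξ : Fin k → ℝ) (f : ℝ → ℝ) : Prop :=
  ∀ i : Fin (k + 1), ∃ (f' : ℝ → ℝ) (L : ℝ≥0),
    (∀ x ∈ piece ξ i, HasDerivAt f (f' x) x) ∧ LipschitzOnWith L f' (piece ξ i)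

/-- `W` is a one-dimensional Brownian motion on `(Ω, F, P)`. -/
structure IsBrownianMotion {Ω : Type*} [MeasurableSpace Ω] (P : Measure Ω)
    (W : ℝ → Ω → ℝ) : Prop where
  meas : ∀ t, Measurable (W t)
  init : ∀ᵐ ω ∂P, W 0 ω = 0
  cont : ∀ᵐ ω ∂P, Continuous fun t => W t ω
  gauss : ∀ s t : ℝ, 0 ≤ s → s ≤ t →
    P.map (fun ω => W t ω - W s ω) = gaussianReal 0 (Real.toNNReal (t - s))
  indep : ∀ (n : ℕ) (t : Fin (n + 1) → ℝ), Monotone t → (∀ i, 0 ≤ t i) →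
    iIndepFun (m := fun _ : Fin n => (inferInstance : MeasurableSpace ℝ))
      (fun i ω => W (t i.succ) ω - W (t i.castSucc) ω) P

/-- `ε₁^δ = √δ · log²(1/δ)`. -/
def eps1 (δ : ℝ) : ℝ := Real.sqrt δ * (Real.log (1 / δ)) ^ 2

/-- `ε₂^δ = δ · log⁴(1/δ)`. -/
def eps2 (δ : ℝ) : ℝ := δ * (Real.log (1 / δ)) ^ 4

/-- The adaptive step-size function `h^δ`. -/
def stepSize (Θ : Set ℝ) (δ x : ℝ) : ℝ :=
  if Metric.infDist x Θ < eps2 δ then δ ^ 2 * (Real.log (1 / δ)) ^ 4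
  else if Metric.infDist x Θ < eps1 δ then (Metric.infDist x Θ / (Real.log (1 / δ)) ^ 2) ^ 2
  else δ

/-- One quasi-Milstein step: value at time `t` started from value `y` at time `u`, driven by
the path `w`.  Note `deriv s y = s'(y)` if `s` is differentiable at `y` and `0` otherwise. -/
def milsteinStep (b s : ℝ → ℝ) (y u t : ℝ) (w : ℝ → ℝ) : ℝ :=
  y + b y * (t - u) + s y * (w t - w u)
    + (1 / 2) * (s y * deriv s y) * ((w t - w u) ^ 2 - (t - u))

variable {Ω : Type*}

/-- The grid of the adaptive quasi-Milstein scheme: `grid b s Θ x₀ W δ i ω = (τ_i^δ(ω), X̂^δ_{τ_i^δ}(ω))`. -/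
def grid (b s : ℝ → ℝ) (Θ : Set ℝ) (x₀ : ℝ) (W : ℝ → Ω → ℝ) (δ : ℝ) :
    ℕ → Ω → ℝ × ℝ
  | 0 => fun _ => (0, x₀)
  | i + 1 => fun ω =>
      let p := grid b s Θ x₀ W δ i ω
      let t' := p.1 + stepSize Θ δ p.2
      (t', milsteinStep b s p.2 p.1 t' fun u => W u ω)

/-- `τ_i^δ`. -/
def gridTime (b s : ℝ → ℝ) (Θ : Set ℝ) (x₀ : ℝ) (W : ℝ → Ω → ℝ) (δ : ℝ) (i : ℕ) (ω : Ω) : ℝ :=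
  (grid b s Θ x₀ W δ i ω).1

/-- `X̂^δ_{τ_i^δ}`. -/
def gridVal (b s : ℝ → ℝ) (Θ : Set ℝ) (x₀ : ℝ) (W : ℝ → Ω → ℝ) (δ : ℝ) (i : ℕ) (ω : Ω) : ℝ :=
  (grid b s Θ x₀ W δ i ω).2

/-- The largest index `i` with `τ_i^δ ≤ t`. -/
def lastIdx (b s : ℝ → ℝ) (Θ : Set ℝ) (x₀ : ℝ) (W : ℝ → Ω → ℝ) (δ t : ℝ) (ω : Ω) : ℕ :=
  sSup {i : ℕ | gridTime b s Θ x₀ W δ i ω ≤ t}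

/-- `t̲^δ = max{τ_i^δ : τ_i^δ ≤ t}`. -/
def lastTime (b s : ℝ → ℝ) (Θ : Set ℝ) (x₀ : ℝ) (W : ℝ → Ω → ℝ) (δ t : ℝ) (ω : Ω) : ℝ :=
  gridTime b s Θ x₀ W δ (lastIdx b s Θ x₀ W δ t ω) ω

/-- `X̂^δ_{t̲^δ}`. -/
def lastVal (b s : ℝ → ℝ) (Θ : Set ℝ) (x₀ : ℝ) (W : ℝ → Ω → ℝ) (δ t : ℝ) (ω : Ω) : ℝ :=
  gridVal b s Θ x₀ W δ (lastIdx b s Θ x₀ W δ t ω) ω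

/-- The time-continuous adaptive quasi-Milstein scheme `X̂^δ_t`. -/
def scheme (b s : ℝ → ℝ) (Θ : Set ℝ) (x₀ : ℝ) (W : ℝ → Ω → ℝ) (δ t : ℝ) (ω : Ω) : ℝ :=
  milsteinStep b s (lastVal b s Θ x₀ W δ t ω) (lastTime b s Θ x₀ W δ t ω) t fun u => W u ω

/-- `N(X̂^δ_1) = min{i ∈ ℕ : τ_i^δ ≥ 1}`, the number of evaluations of `W`. -/
def numSteps (b s : ℝ → ℝ) (Θ : Set ℝ) (x₀ : ℝ) (W : ℝ → Ω → ℝ) (δ : ℝ) (ω : Ω) : ℕ :=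
  sInf {i : ℕ | 1 ≤ gridTime b s Θ x₀ W δ i ω}

/-- The augmented filtration `F_t = σ(σ(W_s : 0 ≤ s ≤ t) ∪ N)` generated by `W`. -/
def augFilt [MeasurableSpace Ω] (P : Measure Ω) (W : ℝ → Ω → ℝ) (t : ℝ) :
    MeasurableSpace Ω :=
  (⨆ s ∈ Set.Icc (0 : ℝ) t, MeasurableSpace.comap (W s) inferInstance) ⊔
    MeasurableSpace.generateFrom {A | MeasurableSet A ∧ P A = 0}

/-- `τ` is a stopping time with respect to the augmented Brownian filtration. -/
def IsAugStoppingTime [MeasurableSpace Ω] (P : Measure Ω) (W : ℝ → Ω → ℝ) (τ : Ω → ℝ) :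
    Prop :=
  ∀ t : ℝ, MeasurableSet[augFilt P W t] {ω | τ ω ≤ t}

/-- The σ-algebra `F_τ` of the `τ`-past. -/
def stoppedSigma [MeasurableSpace Ω] (P : Measure Ω) (W : ℝ → Ω → ℝ) (τ : Ω → ℝ) :
    MeasurableSpace Ω :=
  MeasurableSpace.generateFrom
    {A | MeasurableSet A ∧ ∀ t : ℝ, MeasurableSet[augFilt P W t] (A ∩ {ω | τ ω ≤ t})}

/-- The shifted process `W^τ_t = W_{τ+t} - W_τ`. -/
def shiftedBM (W : ℝ → Ω → ℝ) (τ : Ω → ℝ) : ℝ → Ω → ℝ :=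
  fun t ω => W (τ ω + t) ω - W (τ ω) ω

/-- Left-point Riemann sums for the Itô integral `∫₀ᵗ H dW` along dyadic partitions. -/
def riemannSum (H : ℝ → Ω → ℝ) (W : ℝ → Ω → ℝ) (t : ℝ) (n : ℕ) (ω : Ω) : ℝ :=
  ∑ i ∈ Finset.range (2 ^ n),
    H (t * i / 2 ^ n) ω * (W (t * (i + 1) / 2 ^ n) ω - W (t * i / 2 ^ n) ω)

/-- `X` is a strong solution of `dX_t = b(X_t) dt + s(X_t) dW_t`, `X₀ = x₀`: it is adapted to
the Brownian motion, has continuous paths, and satisfies the integral equation, the stochastic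
integral being the limit in probability of left-point Riemann sums. -/
def IsStrongSolution [MeasurableSpace Ω] (P : Measure Ω) (W : ℝ → Ω → ℝ)
    (b s : ℝ → ℝ) (x₀ : ℝ) (X : ℝ → Ω → ℝ) : Prop :=
  (∀ t, Measurable (X t)) ∧
  (∀ᵐ ω ∂P, Continuous fun t => X t ω) ∧
  (∀ᵐ ω ∂P, X 0 ω = x₀) ∧
  (∀ t : ℝ, 0 ≤ t → ∃ g : (ℝ → ℝ) → ℝ, Measurable g ∧
    ∀ᵐ ω ∂P, X t ω = g fun u => W (min u t) ω) ∧
  (∀ t : ℝ, 0 ≤ t →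
    TendstoInMeasure P (fun n ω => riemannSum (fun u ω' => s (X u ω')) W t n ω) atTop
      fun ω => X t ω - x₀ - ∫ u in (0 : ℝ)..t, b (X u ω))

/-- The bump function `φ(x) = (1-x²)⁴ · 1_{[-1,1]}(x)`. -/
def phiBump (x : ℝ) : ℝ := if x ∈ Set.Icc (-1 : ℝ) 1 then (1 - x ^ 2) ^ 4 else 0

/-- `ρ_{z,α}`, with the convention `1/0 = ∞`. -/
def rho {k : ℕ} (z α : Fin k → ℝ) : ℝ≥0∞ :=
  (⨅ i : Fin k, if α i = 0 then ⊤ else ENNReal.ofReal (1 / (8 * |α i|))) ⊓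
    ⨅ i : Fin k, ⨅ j : Fin k,
      if (i : ℕ) + 1 = (j : ℕ) then ENNReal.ofReal ((z j - z i) / 2) else ⊤

/-- The transformation `G_{z,α,ν}`. -/
def Gmap {k : ℕ} (z α : Fin k → ℝ) (ν : ℝ) (x : ℝ) : ℝ :=
  x + ∑ i : Fin k, α i * (x - z i) * |x - z i| * phiBump ((x - z i) / ν)

/-- The inverse `G_{z,α,ν}^{-1}`. -/
def Ginv {k : ℕ} (z α : Fin k → ℝ) (ν : ℝ) : ℝ → ℝ := Function.invFun (Gmap z α ν)

/-- `α_i = (μ(ξ_i-) - μ(ξ_i+)) / (2σ²(ξ_i))`. -/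
def alphaCoef (b s : ℝ → ℝ) {k : ℕ} (ξ : Fin k → ℝ) (i : Fin k) : ℝ :=
  (Function.leftLim b (ξ i) - Function.rightLim b (ξ i)) / (2 * (s (ξ i)) ^ 2)

open Classical in
/-- `G''_{ξ,α,ν}` extended to all of `ℝ` by
`G''(ξ_i) = 2α_i + 2(μ(ξ_i+) - μ(ξ_i))/σ²(ξ_i)`. -/
def GsecondExt (b s : ℝ → ℝ) {k : ℕ} (ξ : Fin k → ℝ) (ν : ℝ) (x : ℝ) : ℝ :=
  if h : ∃ i, ξ i = x then
    2 * alphaCoef b s ξ h.choose + 2 * (Function.rightLim b x - b x) / (s x) ^ 2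
  else deriv (deriv (Gmap ξ (alphaCoef b s ξ) ν)) x

/-- The transformed drift `μ̃ = (G'·μ + ½G''·σ²) ∘ G⁻¹`. -/
def tildeDrift (b s : ℝ → ℝ) {k : ℕ} (ξ : Fin k → ℝ) (ν : ℝ) (x : ℝ) : ℝ :=
  deriv (Gmap ξ (alphaCoef b s ξ) ν) (Ginv ξ (alphaCoef b s ξ) ν x) *
      b (Ginv ξ (alphaCoef b s ξ) ν x) +
    (1 / 2) * GsecondExt b s ξ ν (Ginv ξ (alphaCoef b s ξ) ν x) *
      (s (Ginv ξ (alphaCoef b s ξ) ν x)) ^ 2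

/-- The transformed diffusion coefficient `σ̃ = (G'·σ) ∘ G⁻¹`. -/
def tildeDiff (b s : ℝ → ℝ) {k : ℕ} (ξ : Fin k → ℝ) (ν : ℝ) (x : ℝ) : ℝ :=
  deriv (Gmap ξ (alphaCoef b s ξ) ν) (Ginv ξ (alphaCoef b s ξ) ν x) *
    s (Ginv ξ (alphaCoef b s ξ) ν x)

/-- The set `S = (⋃ᵢ (ξ_{i-1},ξ_i)²)ᶜ ⊆ ℝ²`. -/
def badSet {k : ℕ} (ξ : Fin k → ℝ) : Set (ℝ × ℝ) :=
  (⋃ i : Fin (k + 1), (piece ξ i) ×ˢ (piece ξ i))ᶜ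


/-! ### Auxiliary layer for Lemma 4.2 -/

section Lemma42Aux
open scoped Topology

/-- Real-constant Lipschitz-on-set predicate. -/
def LipOn (s : Set ℝ) (f : ℝ → ℝ) : Prop :=
  ∃ C : ℝ, 0 ≤ C ∧ ∀ x ∈ s, ∀ y ∈ s, |f x - f y| ≤ C * |x - y|

theorem LipOn.to_lipschitzOnWith {s : Set ℝ} {f : ℝ → ℝ} (h : LipOn s f) :
    ∃ L : ℝ≥0, LipschitzOnWith L f s := by
  obtain ⟨C, hC0, hC⟩ := h
  refine ⟨⟨C, hC0⟩, lipschitzOnWith_iff_dist_le_mul.2 ?_⟩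
  intro x hx y hy
  rw [Real.dist_eq, Real.dist_eq]; exact hC x hx y hy

theorem LipschitzOnWith.toLipOn {s : Set ℝ} {f : ℝ → ℝ} {L : ℝ≥0}
    (h : LipschitzOnWith L f s) : LipOn s f := by
  refine ⟨L, L.coe_nonneg, fun x hx y hy => ?_⟩
  have := lipschitzOnWith_iff_dist_le_mul.1 h x hx y hy
  simpa [Real.dist_eq] using this

theorem LipschitzWith.toLipOn {s : Set ℝ} {f : ℝ → ℝ} {L : ℝ≥0}
    (h : LipschitzWith L f) : LipOn s f :=
  LipschitzOnWith.toLipOn (h.lipschitzOnWith (s := s))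

theorem LipOn.mono {s t : Set ℝ} {f : ℝ → ℝ} (h : LipOn t f) (hst : s ⊆ t) : LipOn s f := by
  obtain ⟨C, hC0, hC⟩ := h
  exact ⟨C, hC0, fun x hx y hy => hC x (hst hx) y (hst hy)⟩

theorem LipOn.const (s : Set ℝ) (c : ℝ) : LipOn s (fun _ => c) :=
  ⟨0, le_refl 0, fun x _ y _ => by simp⟩

theorem LipOn.id (s : Set ℝ) : LipOn s (fun x => x) :=
  ⟨1, zero_le_one, fun x _ y _ => by simp⟩

theorem LipOn.add {s : Set ℝ} {f g : ℝ → ℝ} (hf : LipOn s f) (hg : LipOn s g) :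
    LipOn s (fun x => f x + g x) := by
  obtain ⟨C, hC0, hC⟩ := hf
  obtain ⟨D, hD0, hD⟩ := hg
  refine ⟨C + D, by linarith, fun x hx y hy => ?_⟩
  have h1 := hC x hx y hy
  have h2 := hD x hx y hy
  have : |f x + g x - (f y + g y)| ≤ |f x - f y| + |g x - g y| := by
    have := abs_add_le (f x - f y) (g x - g y)
    rw [show f x + g x - (f y + g y) = (f x - f y) + (g x - g y) by ring]; exact this
  nlinarith

theorem LipOn.const_mul {s : Set ℝ} {f : ℝ → ℝ} (hf : LipOn s f) (c : ℝ) :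
    LipOn s (fun x => c * f x) := by
  obtain ⟨C, hC0, hC⟩ := hf
  refine ⟨|c| * C, by positivity, fun x hx y hy => ?_⟩
  have h1 := hC x hx y hy
  calc |c * f x - c * f y| = |c| * |f x - f y| := by rw [← abs_mul]; ring_nf
    _ ≤ |c| * (C * |x - y|) := by
        exact mul_le_mul_of_nonneg_left h1 (abs_nonneg c)
    _ = |c| * C * |x - y| := by ring

theorem LipOn.comp {s t : Set ℝ} {f g : ℝ → ℝ} (hg : LipOn t g) (hf : LipOn s f)
    (hm : ∀ x ∈ s, f x ∈ t) : LipOn s (fun x => g (f x)) := by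
  obtain ⟨C, hC0, hC⟩ := hg
  obtain ⟨D, hD0, hD⟩ := hf
  refine ⟨C * D, by positivity, fun x hx y hy => ?_⟩
  calc |g (f x) - g (f y)| ≤ C * |f x - f y| := hC _ (hm x hx) _ (hm y hy)
    _ ≤ C * (D * |x - y|) := mul_le_mul_of_nonneg_left (hD x hx y hy) hC0
    _ = C * D * |x - y| := by ring

/-- Master product lemma: `f` Lipschitz and bounded on `s`, `g` Lipschitz and bounded
near the support of `f`; then `f * g` is Lipschitz on `s`. -/
theorem LipOn.mul_support {s : Set ℝ} {f g : ℝ → ℝ} {Lf Lg M B : ℝ}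
    (hLf0 : 0 ≤ Lf) (hLg0 : 0 ≤ Lg) (hM : 0 ≤ M) (hB : 0 ≤ B)
    (hf : ∀ x ∈ s, ∀ y ∈ s, |f x - f y| ≤ Lf * |x - y|)
    (hfM : ∀ x ∈ s, |f x| ≤ M)
    (hgB : ∀ x ∈ s, f x ≠ 0 → ∀ y ∈ s, |x - y| ≤ 1 → |g y| ≤ B)
    (hg : ∀ x ∈ s, f x ≠ 0 → ∀ y ∈ s, |x - y| ≤ 1 → |g x - g y| ≤ Lg * |x - y|) :
    LipOn s (fun x => f x * g x) := by
  have key : ∀ x ∈ s, ∀ y ∈ s, f x ≠ 0 →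
      |f x * g x - f y * g y| ≤ (M * Lg + B * Lf + 2 * M * B) * |x - y| := by
    intro x hx y hy hfx
    by_cases hd : |x - y| ≤ 1
    · have hgy : |g y| ≤ B := hgB x hx hfx y hy hd
      have hgx : |g x| ≤ B := hgB x hx hfx x hx (by simp)
      have hgg : |g x - g y| ≤ Lg * |x - y| := hg x hx hfx y hy hd
      have hff : |f x - f y| ≤ Lf * |x - y| := hf x hx y hy
      have hdec : f x * g x - f y * g y = f x * (g x - g y) + g y * (f x - f y) := by ring
      have habs : |f x * g x - f y * g y| ≤ |f x| * |g x - g y| + |g y| * |f x - f y| := by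
        rw [hdec]
        calc |f x * (g x - g y) + g y * (f x - f y)|
            ≤ |f x * (g x - g y)| + |g y * (f x - f y)| := abs_add_le _ _
          _ = |f x| * |g x - g y| + |g y| * |f x - f y| := by rw [abs_mul, abs_mul]
      have h1 : |f x| * |g x - g y| ≤ M * (Lg * |x - y|) :=
        mul_le_mul (hfM x hx) hgg (abs_nonneg _) hM
      have h2 : |g y| * |f x - f y| ≤ B * (Lf * |x - y|) :=
        mul_le_mul hgy hff (abs_nonneg _) hB
      nlinarith [abs_nonneg (x - y), mul_nonneg (mul_nonneg hM hB) (abs_nonneg (x - y))]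
    · push_neg at hd
      have hgx : |g x| ≤ B := hgB x hx hfx x hx (by simp)
      have h1 : |f x * g x| ≤ M * B := by
        rw [abs_mul]; exact mul_le_mul (hfM x hx) hgx (abs_nonneg _) hM
      have h2 : |f y * g y| ≤ M * B := by
        by_cases hfy : f y = 0
        · simp [hfy]; positivity
        · rw [abs_mul]
          exact mul_le_mul (hfM y hy) (hgB y hy hfy y hy (by simp)) (abs_nonneg _) hM
      have : |f x * g x - f y * g y| ≤ |f x * g x| + |f y * g y| := abs_sub _ _
      nlinarith [mul_nonneg (mul_nonneg hM hB) (by linarith : (0:ℝ) ≤ |x - y| - 1),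
        mul_nonneg (add_nonneg (mul_nonneg hM hLg0) (mul_nonneg hB hLf0)) (abs_nonneg (x - y))]
  refine ⟨M * Lg + B * Lf + 2 * M * B, by positivity, fun x hx y hy => ?_⟩
  by_cases hfx : f x = 0
  · by_cases hfy : f y = 0
    · simp [hfx, hfy]; positivity
    · have := key y hy x hx hfy
      rw [abs_sub_comm (f y * g y), abs_sub_comm y x] at this
      exact this
  · exact key x hx y hy hfx

/-- Two bounded Lipschitz functions multiply to a Lipschitz function. -/
theorem LipOn.mul_bdd {s : Set ℝ} {f g : ℝ → ℝ} {Lf Lg M B : ℝ}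
    (hLf0 : 0 ≤ Lf) (hLg0 : 0 ≤ Lg) (hM : 0 ≤ M) (hB : 0 ≤ B)
    (hf : ∀ x ∈ s, ∀ y ∈ s, |f x - f y| ≤ Lf * |x - y|)
    (hfM : ∀ x ∈ s, |f x| ≤ M)
    (hgB : ∀ x ∈ s, |g x| ≤ B)
    (hg : ∀ x ∈ s, ∀ y ∈ s, |g x - g y| ≤ Lg * |x - y|) :
    LipOn s (fun x => f x * g x) :=
  LipOn.mul_support hLf0 hLg0 hM hB hf hfM (fun _ _ _ y hy _ => hgB y hy)
    (fun x hx _ y hy _ => hg x hx y hy)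

/-- Reciprocal of a Lipschitz function bounded below. -/
theorem LipOn.inv {s : Set ℝ} {f : ℝ → ℝ} {c : ℝ} (hc : 0 < c)
    (hlow : ∀ x ∈ s, c ≤ f x) (hf : LipOn s f) : LipOn s (fun x => (f x)⁻¹) := by
  obtain ⟨C, hC0, hC⟩ := hf
  refine ⟨C / c ^ 2, by positivity, fun x hx y hy => ?_⟩
  have hx0 : c ≤ f x := hlow x hx
  have hy0 : c ≤ f y := hlow y hy
  have hfx : f x ≠ 0 := by linarith
  have hfy : f y ≠ 0 := by linarith
  have heq : (f x)⁻¹ - (f y)⁻¹ = (f y - f x) / (f x * f y) := by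
    field_simp
  rw [heq, abs_div]
  have h1 : |f y - f x| ≤ C * |x - y| := by
    rw [abs_sub_comm]; exact hC x hx y hy
  have h2 : c ^ 2 ≤ |f x * f y| := by
    rw [abs_mul]
    have : c ≤ |f x| := le_trans hx0 (le_abs_self _)
    have : c ≤ |f y| := le_trans hy0 (le_abs_self _)
    nlinarith
  rw [div_le_iff₀ (by nlinarith : (0:ℝ) < |f x * f y|)]
  have hcc : (0:ℝ) < c ^ 2 := by positivity
  calc |f y - f x| ≤ C * |x - y| := h1
    _ = C / c ^ 2 * |x - y| * c ^ 2 := by field_simp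
    _ ≤ C / c ^ 2 * |x - y| * |f x * f y| := by
        apply mul_le_mul_of_nonneg_left h2; positivity

/-- Squeeze lemma: quadratic bound gives derivative zero. -/
theorem hasDerivAt_of_sq_bound {f : ℝ → ℝ} {a C : ℝ}
    (h : ∀ y, |f y - f a| ≤ C * (y - a) ^ 2) : HasDerivAt f 0 a := by
  rw [hasDerivAt_iff_tendsto]
  have hbd : ∀ y : ℝ, ‖y - a‖⁻¹ * ‖f y - f a - (y - a) • (0:ℝ)‖ ≤ |C| * |y - a| := by
    intro y
    rcases eq_or_ne y a with rfl | hy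
    · simp
    · have hya : (0:ℝ) < |y - a| := by
        rw [abs_pos]; exact sub_ne_zero.2 hy
      have h1 : |f y - f a| ≤ |C| * (y - a) ^ 2 := by
        refine le_trans (h y) ?_
        have : C ≤ |C| := le_abs_self C
        nlinarith [sq_nonneg (y - a)]
      simp only [smul_zero, sub_zero, Real.norm_eq_abs]
      rw [inv_mul_le_iff₀ hya]
      calc |f y - f a| ≤ |C| * (y - a) ^ 2 := h1
        _ = |y - a| * (|C| * |y - a|) := by
            have hsq : (y - a) ^ 2 = |y - a| ^ 2 := (sq_abs _).symm
            rw [hsq]; ring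
  refine squeeze_zero (fun y => by positivity) hbd ?_
  have : Tendsto (fun y : ℝ => |C| * |y - a|) (𝓝 a) (𝓝 (|C| * |a - a|)) := by
    apply Tendsto.const_mul
    exact (continuous_abs.comp (continuous_id.sub continuous_const)).continuousAt
  simpa using this

end Lemma42Aux


section Lemma42Phi
open scoped Topology

/-- Clamp to `[-ν, ν]`. -/
def clamp (ν x : ℝ) : ℝ := max (-ν) (min ν x)

theorem clamp_eq {ν x : ℝ} (h : |x| ≤ ν) : clamp ν x = x := by
  rcases abs_le.1 h with ⟨h1, h2⟩
  unfold clamp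
  rw [min_eq_right h2, max_eq_right h1]

theorem abs_clamp_le {ν : ℝ} (hν : 0 ≤ ν) (x : ℝ) : |clamp ν x| ≤ ν := by
  unfold clamp
  rw [abs_le]
  refine ⟨le_max_left _ _, max_le (by linarith) (min_le_left _ _)⟩

theorem clamp_lip (ν : ℝ) : ∀ x y : ℝ, |clamp ν x - clamp ν y| ≤ 1 * |x - y| := by
  intro x y
  rw [one_mul]
  unfold clamp
  calc |max (-ν) (min ν x) - max (-ν) (min ν y)|
      = |max (min ν x) (-ν) - max (min ν y) (-ν)| := by rw [max_comm (-ν), max_comm (-ν)]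
    _ ≤ |min ν x - min ν y| := abs_max_sub_max_le_abs _ _ _
    _ ≤ max |ν - ν| |x - y| := abs_min_sub_min_le_max _ _ _ _
    _ = |x - y| := by simp

/-- Polynomial pieces of the bump and its derivatives. -/
def p0 (t : ℝ) : ℝ := (1 - t ^ 2) ^ 4
def p1 (t : ℝ) : ℝ := -8 * t * (1 - t ^ 2) ^ 3
def p2 (t : ℝ) : ℝ := (1 - t ^ 2) ^ 2 * (56 * t ^ 2 - 8)
def p3 (t : ℝ) : ℝ := 48 * t * (1 - t ^ 2) * (3 - 7 * t ^ 2)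

/-- `φ' etc. as global functions. -/
def phi1 (x : ℝ) : ℝ := if x ∈ Set.Icc (-1 : ℝ) 1 then p1 x else 0
def phi2 (x : ℝ) : ℝ := if x ∈ Set.Icc (-1 : ℝ) 1 then p2 x else 0
def phi3 (x : ℝ) : ℝ := if x ∈ Set.Icc (-1 : ℝ) 1 then p3 x else 0

theorem hasDerivAt_p0 (t : ℝ) : HasDerivAt p0 (p1 t) t := by
  have h : HasDerivAt (fun t : ℝ => 1 - t ^ 2) (-(2 * t)) t := by
    simpa using (hasDerivAt_pow 2 t).const_sub 1
  have := h.pow 4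
  refine this.congr_deriv ?_
  unfold p1; push_cast; ring

theorem hasDerivAt_p1 (t : ℝ) : HasDerivAt p1 (p2 t) t := by
  have h0 : HasDerivAt (fun t : ℝ => -8 * t) (-8) t := by
    simpa using (hasDerivAt_id t).const_mul (-8 : ℝ)
  have h : HasDerivAt (fun t : ℝ => 1 - t ^ 2) (-(2 * t)) t := by
    simpa using (hasDerivAt_pow 2 t).const_sub 1
  have := h0.mul (h.pow 3)
  refine this.congr_deriv ?_
  unfold p2; push_cast; simp only [Pi.pow_apply, Pi.mul_apply]; ring

theorem hasDerivAt_p2 (t : ℝ) : HasDerivAt p2 (p3 t) t := by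
  have h : HasDerivAt (fun t : ℝ => 1 - t ^ 2) (-(2 * t)) t := by
    simpa using (hasDerivAt_pow 2 t).const_sub 1
  have h2 : HasDerivAt (fun t : ℝ => 56 * t ^ 2 - 8) (56 * (2 * t)) t := by
    simpa using ((hasDerivAt_pow 2 t).const_mul (56 : ℝ)).sub_const 8
  have := (h.pow 2).mul h2
  refine this.congr_deriv ?_
  unfold p3; push_cast; simp only [Pi.pow_apply, Pi.mul_apply]; ring

theorem mem_Icc_of_abs {x : ℝ} (h : |x| ≤ 1) : x ∈ Set.Icc (-1 : ℝ) 1 := by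
  rcases abs_le.1 h with ⟨h1, h2⟩; exact ⟨h1, h2⟩

theorem not_mem_Icc_of_abs {x : ℝ} (h : 1 < |x|) : x ∉ Set.Icc (-1 : ℝ) 1 := by
  intro hx
  rcases hx with ⟨h1, h2⟩
  have : |x| ≤ 1 := abs_le.2 ⟨h1, h2⟩
  linarith

theorem phiBump_vanish {x : ℝ} (h : 1 < |x|) : phiBump x = 0 := by
  simp [phiBump, not_mem_Icc_of_abs h]

theorem phi1_vanish {x : ℝ} (h : 1 < |x|) : phi1 x = 0 := by
  simp [phi1, not_mem_Icc_of_abs h]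

theorem phi2_vanish {x : ℝ} (h : 1 < |x|) : phi2 x = 0 := by
  simp [phi2, not_mem_Icc_of_abs h]

theorem phi3_vanish {x : ℝ} (h : 1 < |x|) : phi3 x = 0 := by
  simp [phi3, not_mem_Icc_of_abs h]

theorem phiBump_zero : phiBump 0 = 1 := by norm_num [phiBump]

/-- Derivative of a piecewise bump: generic boundary + interior machinery. -/
theorem hasDerivAt_bump_piece {f g : ℝ → ℝ} {pf pg : ℝ → ℝ} {Cb : ℝ}
    (hf : f = fun x => if x ∈ Set.Icc (-1 : ℝ) 1 then pf x else 0)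
    (hg : g = fun x => if x ∈ Set.Icc (-1 : ℝ) 1 then pg x else 0)
    (hder : ∀ t, HasDerivAt pf (pg t) t)
    (hb1 : pf 1 = 0) (hbm1 : pf (-1) = 0) (hg1 : pg 1 = 0) (hgm1 : pg (-1) = 0)
    (hquad : ∀ y ∈ Set.Icc (-1 : ℝ) 1, |pf y| ≤ Cb * (1 - |y|) ^ 2) :
    ∀ x, HasDerivAt f (g x) x := by
  have hval : ∀ y : ℝ, |f y| ≤ Cb * (1 - |y|) ^ 2 := by
    intro y
    by_cases hy : y ∈ Set.Icc (-1 : ℝ) 1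
    · rw [hf]; simp only [if_pos hy]; exact hquad y hy
    · rw [hf]; simp only [if_neg hy]
      have h1 : 1 < |y| := by
        by_contra hc
        push_neg at hc
        exact hy (mem_Icc_of_abs hc)
      have : 0 ≤ Cb := by
        have := hquad 0 (by norm_num)
        have h0 : |pf 0| ≤ Cb * 1 := by simpa using this
        nlinarith [abs_nonneg (pf 0)]
      simp only [abs_zero]
      positivity
  intro x
  rcases lt_trichotomy (|x|) 1 with hlt | heq | hgt
  · -- interior
    have hmem : ∀ᶠ y in 𝓝 x, y ∈ Set.Ioo (-1 : ℝ) 1 := by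
      have : Set.Ioo (-1 : ℝ) 1 ∈ 𝓝 x := by
        apply Ioo_mem_nhds
        · rcases abs_lt.1 hlt with ⟨h1, _⟩; linarith
        · rcases abs_lt.1 hlt with ⟨_, h2⟩; linarith
      exact this
    have heq' : f =ᶠ[𝓝 x] pf := by
      filter_upwards [hmem] with y hy
      rw [hf]; simp only [if_pos (Set.mem_Icc_of_Ioo hy)]
    have : HasDerivAt f (pg x) x := (hder x).congr_of_eventuallyEq heq'
    have hgx : g x = pg x := by
      rw [hg]; simp only [if_pos (mem_Icc_of_abs (le_of_lt hlt))]
    rw [hgx]; exact this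
  · -- boundary: x = 1 or x = -1
    have hgx : g x = 0 := by
      rcases abs_eq (by norm_num : (0:ℝ) ≤ 1) |>.1 heq with h | h
      · rw [hg, h]; simp only [if_pos (by norm_num : (1:ℝ) ∈ Set.Icc (-1:ℝ) 1)]; exact hg1
      · rw [hg, h]; simp only [if_pos (by norm_num : (-1:ℝ) ∈ Set.Icc (-1:ℝ) 1)]; exact hgm1
    rw [hgx]
    have hfx : f x = 0 := by
      rcases abs_eq (by norm_num : (0:ℝ) ≤ 1) |>.1 heq with h | h
      · rw [hf, h]; simp only [if_pos (by norm_num : (1:ℝ) ∈ Set.Icc (-1:ℝ) 1)]; exact hb1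
      · rw [hf, h]; simp only [if_pos (by norm_num : (-1:ℝ) ∈ Set.Icc (-1:ℝ) 1)]; exact hbm1
    apply hasDerivAt_of_sq_bound (C := Cb)
    intro y
    rw [hfx, sub_zero]
    refine le_trans (hval y) ?_
    have h1 : (1 - |y|) ^ 2 ≤ (y - x) ^ 2 := by
      have hx1 : |x| = 1 := heq
      have habs : |(|y| - |x|)| ≤ |y - x| := abs_abs_sub_abs_le_abs_sub y x
      have : |(1 - |y|)| ≤ |y - x| := by
        rw [hx1] at habs
        rwa [abs_sub_comm] at habs
      calc (1 - |y|) ^ 2 = |(1 - |y|)| ^ 2 := (sq_abs _).symm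
        _ ≤ |y - x| ^ 2 := by
            apply pow_le_pow_left₀ (abs_nonneg _) this
        _ = (y - x) ^ 2 := sq_abs _
    have hCb : 0 ≤ Cb := by
      have := hquad 0 (by norm_num)
      have h0 : |pf 0| ≤ Cb * 1 := by simpa using this
      nlinarith [abs_nonneg (pf 0)]
    nlinarith
  · -- exterior
    have hmem : ∀ᶠ y in 𝓝 x, 1 < |y| := by
      have : {y : ℝ | 1 < |y|} ∈ 𝓝 x := by
        apply IsOpen.mem_nhds
        · exact isOpen_lt continuous_const continuous_abs
        · exact hgt
      exact this
    have heq' : f =ᶠ[𝓝 x] fun _ => (0:ℝ) := by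
      filter_upwards [hmem] with y hy
      rw [hf]; simp only [if_neg (not_mem_Icc_of_abs hy)]
    have : HasDerivAt f 0 x := (hasDerivAt_const x 0).congr_of_eventuallyEq heq'
    have hgx : g x = 0 := by
      rw [hg]; simp only [if_neg (not_mem_Icc_of_abs hgt)]
    rw [hgx]; exact this

theorem hasDerivAt_phiBump (x : ℝ) : HasDerivAt phiBump (phi1 x) x := by
  refine hasDerivAt_bump_piece (pf := p0) (pg := p1) (Cb := 64) ?_ rfl hasDerivAt_p0
    (by norm_num [p0]) (by norm_num [p0]) (by norm_num [p1]) (by norm_num [p1]) ?_ x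
  · funext y; simp [phiBump, p0]
  · intro y hy
    rcases hy with ⟨h1, h2⟩
    have hy1 : |y| ≤ 1 := abs_le.2 ⟨h1, h2⟩
    have h3 : |p0 y| = ((1 - y) * (1 + y)) ^ 4 := by
      unfold p0
      rw [abs_of_nonneg (by positivity)]
      ring_nf
    have key : (1 - y ^ 2) ^ 4 ≤ 64 * (1 - |y|) ^ 2 := by
      have e1 : 1 - y ^ 2 = (1 - |y|) * (1 + |y|) := by
        rw [← sq_abs]; ring
      rw [e1]
      have h4 : 0 ≤ 1 - |y| := by linarith
      have h5 : 1 + |y| ≤ 2 := by linarith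
      have h7 : (0:ℝ) ≤ 1 + |y| := by nlinarith [abs_nonneg y]
      have h8 : (1 - |y|) ^ 2 ≤ 1 := by nlinarith [abs_nonneg y]
      have h9 : (1 + |y|) ^ 4 ≤ 16 := by nlinarith [abs_nonneg y, sq_nonneg (1 + |y|)]
      have h10 : (1 - |y|) ^ 2 * (1 + |y|) ^ 4 ≤ 16 := by nlinarith [sq_nonneg (1 - |y|)]
      calc ((1 - |y|) * (1 + |y|)) ^ 4
          = (1 - |y|) ^ 2 * ((1 - |y|) ^ 2 * (1 + |y|) ^ 4) := by ring
        _ ≤ (1 - |y|) ^ 2 * 16 := by nlinarith [sq_nonneg (1 - |y|)]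
        _ ≤ 64 * (1 - |y|) ^ 2 := by nlinarith [sq_nonneg (1 - |y|)]
    calc |p0 y| = (1 - y ^ 2) ^ 4 := by
          unfold p0; rw [abs_of_nonneg (by positivity)]
      _ ≤ 64 * (1 - |y|) ^ 2 := key

end Lemma42Phi


section Lemma42Phi2
open scoped Topology

theorem hasDerivAt_phi1 (x : ℝ) : HasDerivAt phi1 (phi2 x) x := by
  refine hasDerivAt_bump_piece (pf := p1) (pg := p2) (Cb := 64) rfl rfl hasDerivAt_p1
    (by norm_num [p1]) (by norm_num [p1]) (by norm_num [p2]) (by norm_num [p2]) ?_ x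
  intro y hy
  rcases hy with ⟨h1, h2⟩
  have hy1 : |y| ≤ 1 := abs_le.2 ⟨h1, h2⟩
  have e1 : 1 - y ^ 2 = (1 - |y|) * (1 + |y|) := by rw [← sq_abs]; ring
  have h4 : 0 ≤ 1 - |y| := by linarith
  have h7 : (0:ℝ) ≤ 1 + |y| := by nlinarith [abs_nonneg y]
  have habs : |p1 y| = 8 * |y| * ((1 - |y|) * (1 + |y|)) ^ 3 := by
    unfold p1
    rw [← e1, abs_mul, abs_mul]
    rw [abs_of_nonneg (pow_nonneg (by nlinarith [sq_abs y] : (0:ℝ) ≤ 1 - y^2) 3)]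
    norm_num
  rw [habs]
  have h5 : 1 + |y| ≤ 2 := by linarith
  have h8 : (1 - |y|) ^ 3 ≤ (1 - |y|) ^ 2 := by
    nlinarith [mul_nonneg (sq_nonneg (1 - |y|)) (abs_nonneg y)]
  have h9 : (1 + |y|) ^ 3 ≤ 8 := by nlinarith [abs_nonneg y]
  have h10 : (1 - |y|) ^ 3 * (1 + |y|) ^ 3 ≤ 8 * (1 - |y|) ^ 2 := by
    calc (1 - |y|) ^ 3 * (1 + |y|) ^ 3 ≤ (1 - |y|) ^ 2 * 8 := by
          apply mul_le_mul h8 h9 (by positivity) (by positivity)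
      _ = 8 * (1 - |y|) ^ 2 := by ring
  calc 8 * |y| * ((1 - |y|) * (1 + |y|)) ^ 3
      = 8 * |y| * ((1 - |y|) ^ 3 * (1 + |y|) ^ 3) := by ring
    _ ≤ 8 * 1 * (8 * (1 - |y|) ^ 2) := by
        apply mul_le_mul (by nlinarith [abs_nonneg y]) h10 (by positivity) (by norm_num)
    _ = 64 * (1 - |y|) ^ 2 := by ring

theorem hasDerivAt_phi2 (x : ℝ) : HasDerivAt phi2 (phi3 x) x := by
  refine hasDerivAt_bump_piece (pf := p2) (pg := p3) (Cb := 192) rfl rfl hasDerivAt_p2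
    (by norm_num [p2]) (by norm_num [p2]) (by norm_num [p3]) (by norm_num [p3]) ?_ x
  intro y hy
  rcases hy with ⟨h1, h2⟩
  have hy1 : |y| ≤ 1 := abs_le.2 ⟨h1, h2⟩
  have e1 : 1 - y ^ 2 = (1 - |y|) * (1 + |y|) := by rw [← sq_abs]; ring
  have h4 : 0 ≤ 1 - |y| := by linarith
  have h7 : (0:ℝ) ≤ 1 + |y| := by nlinarith [abs_nonneg y]
  have h5 : 1 + |y| ≤ 2 := by linarith
  have habs : |p2 y| = ((1 - |y|) * (1 + |y|)) ^ 2 * |56 * y ^ 2 - 8| := by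
    unfold p2
    rw [← e1, abs_mul, abs_of_nonneg (by positivity : (0:ℝ) ≤ (1 - y^2)^2)]
  rw [habs]
  have hq : |56 * y ^ 2 - 8| ≤ 48 := by
    rw [abs_le]
    constructor <;> nlinarith [sq_abs y, abs_nonneg y]
  have h9 : (1 + |y|) ^ 2 ≤ 4 := by nlinarith [abs_nonneg y]
  calc ((1 - |y|) * (1 + |y|)) ^ 2 * |56 * y ^ 2 - 8|
      = (1 - |y|) ^ 2 * (1 + |y|) ^ 2 * |56 * y ^ 2 - 8| := by ring
    _ ≤ (1 - |y|) ^ 2 * (1 + |y|) ^ 2 * 48 := by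
        apply mul_le_mul_of_nonneg_left hq (by positivity)
    _ ≤ (1 - |y|) ^ 2 * 4 * 48 := by nlinarith [sq_nonneg (1 - |y|)]
    _ = 192 * (1 - |y|) ^ 2 := by ring

theorem abs_phiBump_le (x : ℝ) : |phiBump x| ≤ 1 := by
  by_cases h : x ∈ Set.Icc (-1 : ℝ) 1
  · rcases h with ⟨h1, h2⟩
    simp only [phiBump, if_pos (Set.mem_Icc.2 ⟨h1, h2⟩)]
    rw [abs_of_nonneg (by positivity)]
    have ha0 : (0:ℝ) ≤ 1 - x ^ 2 := by nlinarith
    have ha1 : 1 - x ^ 2 ≤ 1 := by nlinarith [sq_nonneg x]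
    calc (1 - x ^ 2) ^ 4 ≤ 1 ^ 4 := pow_le_pow_left₀ ha0 ha1 4
      _ = 1 := by norm_num
  · simp [phiBump, h]

theorem abs_phi1_le (x : ℝ) : |phi1 x| ≤ 2 := by
  by_cases h : x ∈ Set.Icc (-1 : ℝ) 1
  · rcases h with ⟨h1, h2⟩
    simp only [phi1, if_pos (Set.mem_Icc.2 ⟨h1, h2⟩)]
    have keylem : ∀ t : ℝ, 0 ≤ t → t ≤ 1 → 64 * t * (1 - t) ^ 6 ≤ 4 := by
      intro t h0t ht1
      by_cases hc : t ≤ 1 / 14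
      · have hb : (1 - t) ^ 6 ≤ 1 - 6 * t + 15 * t ^ 2 := by
          have hneg : -20 + 15 * t - 6 * t ^ 2 + t ^ 3 ≤ 0 := by nlinarith
          nlinarith [mul_nonneg (mul_nonneg h0t h0t) h0t,
            mul_nonpos_of_nonneg_of_nonpos (pow_nonneg h0t 3) hneg]
        have h64 : (0:ℝ) ≤ 64 * t := by linarith
        have := mul_le_mul_of_nonneg_left hb h64
        nlinarith [sq_nonneg t, mul_nonneg h0t h0t,
          mul_nonneg (mul_nonneg h0t h0t) (show (0:ℝ) ≤ 1/14 - t by linarith),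
          mul_nonneg h0t (show (0:ℝ) ≤ 1/14 - t by linarith)]
      · push_neg at hc
        have h1mt : (0:ℝ) ≤ 1 - t := by linarith
        have hr : (0:ℝ) ≤ t^4 - 14/3*t^3 + 101/12*t^2 - 763/108*t + 3125/1296 := by
          nlinarith [sq_nonneg (t^2 - 7/3*t + 28/25), sq_nonneg (t - 4963/3954)]
        have h5 : t * (1 - t) ^ 5 ≤ 3125 / 46656 := by
          nlinarith [mul_nonneg (sq_nonneg (t - 1/6)) hr]
        have h6 := mul_le_mul_of_nonneg_right h5 h1mt
        nlinarith [h6]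
    have hsq : (p1 x) ^ 2 ≤ 4 := by
      unfold p1
      have key := keylem (x ^ 2) (sq_nonneg x) (by nlinarith)
      nlinarith [key]
    nlinarith [abs_nonneg (p1 x), sq_abs (p1 x)]
  · simp [phi1, h]

theorem abs_phi2_le (x : ℝ) : |phi2 x| ≤ 48 := by
  by_cases h : x ∈ Set.Icc (-1 : ℝ) 1
  · rcases h with ⟨h1, h2⟩
    simp only [phi2, if_pos (Set.mem_Icc.2 ⟨h1, h2⟩)]
    unfold p2
    rw [abs_mul, abs_of_nonneg (by positivity : (0:ℝ) ≤ (1 - x^2)^2)]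
    have hq : |56 * x ^ 2 - 8| ≤ 48 := by
      rw [abs_le]; constructor <;> nlinarith
    have h8 : (1 - x ^ 2) ^ 2 ≤ 1 := by
      have ha0 : (0:ℝ) ≤ 1 - x ^ 2 := by nlinarith
      nlinarith [mul_nonneg ha0 (sq_nonneg x)]
    nlinarith [abs_nonneg (56 * x ^ 2 - 8), sq_nonneg (1 - x^2)]
  · simp [phi2, h]

theorem abs_phi3_le (x : ℝ) : |phi3 x| ≤ 192 := by
  by_cases h : x ∈ Set.Icc (-1 : ℝ) 1
  · rcases h with ⟨h1, h2⟩
    simp only [phi3, if_pos (Set.mem_Icc.2 ⟨h1, h2⟩)]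
    unfold p3
    have e : 48 * x * (1 - x ^ 2) * (3 - 7 * x ^ 2) = 48 * (x * (1 - x ^ 2)) * (3 - 7 * x ^ 2) := by
      ring
    rw [e, abs_mul, abs_mul]
    have h3 : |x * (1 - x ^ 2)| ≤ 1 := by
      rw [abs_mul]
      have : |x| ≤ 1 := abs_le.2 ⟨h1, h2⟩
      have : |1 - x ^ 2| ≤ 1 := by rw [abs_le]; constructor <;> nlinarith
      nlinarith [abs_nonneg x, abs_nonneg (1 - x^2), abs_le.2 (⟨h1, h2⟩ : -1 ≤ x ∧ x ≤ 1)]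
    have h4 : |3 - 7 * x ^ 2| ≤ 4 := by rw [abs_le]; constructor <;> nlinarith
    have h48 : |(48:ℝ)| = 48 := by norm_num
    rw [h48]
    nlinarith [abs_nonneg (x * (1 - x^2)), abs_nonneg (3 - 7*x^2)]
  · simp [phi3, h]

/-- Lipschitz from a derivative bound on a convex set. -/
theorem lipOn_of_deriv {s : Set ℝ} (hs : Convex ℝ s) {f f' : ℝ → ℝ} {C : ℝ} (hC : 0 ≤ C)
    (hd : ∀ x ∈ s, HasDerivAt f (f' x) x) (hb : ∀ x ∈ s, |f' x| ≤ C) : LipOn s f := by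
  refine ⟨C, hC, fun x hx y hy => ?_⟩
  have := hs.norm_image_sub_le_of_norm_hasDerivWithin_le
    (f' := f') (fun z hz => (hd z hz).hasDerivWithinAt)
    (fun z hz => by simpa [Real.norm_eq_abs] using hb z hz) hy hx
  simpa [Real.norm_eq_abs] using this

theorem lipOn_phiBump : LipOn Set.univ phiBump :=
  lipOn_of_deriv convex_univ (by norm_num : (0:ℝ) ≤ 2)
    (fun x _ => hasDerivAt_phiBump x) (fun x _ => abs_phi1_le x)

theorem lipOn_phi1 : LipOn Set.univ phi1 :=
  lipOn_of_deriv convex_univ (by norm_num : (0:ℝ) ≤ 48)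
    (fun x _ => hasDerivAt_phi1 x) (fun x _ => abs_phi2_le x)

theorem lipOn_phi2 : LipOn Set.univ phi2 :=
  lipOn_of_deriv convex_univ (by norm_num : (0:ℝ) ≤ 192)
    (fun x _ => hasDerivAt_phi2 x) (fun x _ => abs_phi3_le x)

def p4 (t : ℝ) : ℝ := 48 * (3 - 30 * t ^ 2 + 35 * t ^ 4)

theorem hasDerivAt_p3 (t : ℝ) : HasDerivAt p3 (p4 t) t := by
  have e : p3 = fun t : ℝ => 48 * (3 * t - 10 * t ^ 3 + 7 * t ^ 5) := by
    funext t; unfold p3; ring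
  rw [e]
  have h1 : HasDerivAt (fun t : ℝ => 3 * t - 10 * t ^ 3 + 7 * t ^ 5)
      (3 - 10 * (3 * t ^ 2) + 7 * (5 * t ^ 4)) t := by
    have ha : HasDerivAt (fun t : ℝ => 3 * t) 3 t := by
      simpa using (hasDerivAt_id t).const_mul (3:ℝ)
    have hb : HasDerivAt (fun t : ℝ => 10 * t ^ 3) (10 * (3 * t ^ 2)) t := by
      simpa using (hasDerivAt_pow 3 t).const_mul (10:ℝ)
    have hc : HasDerivAt (fun t : ℝ => 7 * t ^ 5) (7 * (5 * t ^ 4)) t := by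
      simpa using (hasDerivAt_pow 5 t).const_mul (7:ℝ)
    exact (ha.sub hb).add hc
  have := h1.const_mul (48:ℝ)
  refine this.congr_deriv ?_
  unfold p4; ring

theorem phi3_eq_comp (x : ℝ) : phi3 x = p3 (clamp 1 x) := by
  by_cases h : |x| ≤ 1
  · rw [clamp_eq h]
    unfold phi3
    rw [if_pos (mem_Icc_of_abs h)]
  · push_neg at h
    rw [phi3_vanish h]
    rcases lt_abs.1 h with h1 | h1
    · have : clamp 1 x = 1 := by
        unfold clamp
        rw [min_eq_left (by linarith), max_eq_right (by norm_num)]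
      rw [this]; norm_num [p3]
    · have : clamp 1 x = -1 := by
        unfold clamp
        rw [min_eq_right (by linarith), max_eq_left (by linarith)]
      rw [this]; norm_num [p3]

theorem lipOn_phi3 : LipOn Set.univ phi3 := by
  have he : phi3 = fun x => p3 (clamp 1 x) := funext phi3_eq_comp
  rw [he]
  have hp3 : LipOn (Set.Icc (-1:ℝ) 1) p3 := by
    apply lipOn_of_deriv (convex_Icc _ _) (by norm_num : (0:ℝ) ≤ 48 * 68)
      (fun x _ => hasDerivAt_p3 x)
    intro x hx
    rcases hx with ⟨h1, h2⟩
    unfold p4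
    have hx2 : x ^ 2 ≤ 1 := by nlinarith
    have hx4 : x ^ 4 ≤ 1 := by nlinarith [sq_nonneg x, sq_nonneg (x^2), mul_nonneg (show (0:ℝ) ≤ 1 - x^2 by nlinarith) (sq_nonneg x)]
    rw [abs_le]; constructor <;> nlinarith [sq_nonneg x, sq_nonneg (x^2)]
  have hcl : LipOn Set.univ (clamp 1) := ⟨1, by norm_num, fun x _ y _ => clamp_lip 1 x y⟩
  exact hp3.comp hcl (fun x _ => mem_Icc_of_abs (abs_clamp_le (by norm_num) x))

/-- sign function (value `1` at `0`). -/
def sgn (x : ℝ) : ℝ := if x < 0 then -1 else 1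

theorem abs_sgn_le (x : ℝ) : |sgn x| ≤ 1 := by
  unfold sgn; split <;> norm_num

theorem hasDerivAt_mul_abs (x : ℝ) : HasDerivAt (fun y : ℝ => y * |y|) (2 * |x|) x := by
  rcases lt_trichotomy x 0 with hx | rfl | hx
  · have heq : (fun y : ℝ => y * |y|) =ᶠ[𝓝 x] fun y => -(y ^ 2) := by
      filter_upwards [Iio_mem_nhds hx] with y hy
      rw [abs_of_neg hy]; ring
    have hd : HasDerivAt (fun y : ℝ => -(y ^ 2)) (-(2 * x)) x := by
      refine ((hasDerivAt_pow 2 x).neg).congr_deriv ?_; simp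
    have h2 := hd.congr_of_eventuallyEq heq
    have hval : 2 * |x| = -(2 * x) := by rw [abs_of_neg hx]; ring
    rw [hval]; exact h2
  · have : HasDerivAt (fun y : ℝ => y * |y|) 0 0 := by
      apply hasDerivAt_of_sq_bound (C := 1)
      intro y
      simp only [abs_zero, mul_zero, sub_zero]
      rw [abs_mul, abs_abs]
      nlinarith [sq_abs y]
    simpa using this
  · have heq : (fun y : ℝ => y * |y|) =ᶠ[𝓝 x] fun y => y ^ 2 := by
      filter_upwards [Ioi_mem_nhds hx] with y hy
      rw [abs_of_pos hy]; ring
    have hd : HasDerivAt (fun y : ℝ => y ^ 2) (2 * x) x := by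
      simpa using hasDerivAt_pow 2 x
    have h2 := hd.congr_of_eventuallyEq heq
    have hval : 2 * |x| = 2 * x := by rw [abs_of_pos hx]
    rw [hval]; exact h2

theorem hasDerivAt_abs' {x : ℝ} (hx : x ≠ 0) : HasDerivAt (fun y : ℝ => |y|) (sgn x) x := by
  rcases hx.lt_or_gt with h | h
  · have := hasDerivAt_abs_neg h
    simpa [sgn, if_pos h] using this
  · have := hasDerivAt_abs_pos h
    have hns : ¬ x < 0 := by linarith
    simpa [sgn, if_neg hns] using this

theorem sgn_eventually_eq {x z : ℝ} (hx : x ≠ z) :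
    (fun y : ℝ => sgn (y - z)) =ᶠ[𝓝 x] fun _ => sgn (x - z) := by
  rcases hx.lt_or_gt with h | h
  · filter_upwards [Iio_mem_nhds h] with y hy
    have h1 : y - z < 0 := by simp at hy; linarith
    have h2 : x - z < 0 := by linarith
    simp [sgn, h1, h2]
  · filter_upwards [Ioi_mem_nhds h] with y hy
    have h1 : ¬ y - z < 0 := by simp at hy; linarith
    have h2 : ¬ x - z < 0 := by linarith
    simp [sgn, h1, h2]

end Lemma42Phi2


section Lemma42Bump
open scoped Topology

/-- A single bump summand of `Gmap` and its first three derivatives. -/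
def bump (ν z a x : ℝ) : ℝ := a * (x - z) * |x - z| * phiBump ((x - z) / ν)

def bump1 (ν z a x : ℝ) : ℝ :=
  a * (2 * |x - z| * phiBump ((x - z) / ν) + (x - z) * |x - z| * phi1 ((x - z) / ν) / ν)

def bump2 (ν z a x : ℝ) : ℝ :=
  a * (2 * sgn (x - z) * phiBump ((x - z) / ν) + 4 * |x - z| * phi1 ((x - z) / ν) / ν
    + (x - z) * |x - z| * phi2 ((x - z) / ν) / ν ^ 2)

def bump3 (ν z a x : ℝ) : ℝ :=
  a * (6 * sgn (x - z) * phi1 ((x - z) / ν) / ν + 6 * |x - z| * phi2 ((x - z) / ν) / ν ^ 2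
    + (x - z) * |x - z| * phi3 ((x - z) / ν) / ν ^ 3)

variable {ν z a : ℝ}

theorem hasDerivAt_sub_shift (z : ℝ) (x : ℝ) : HasDerivAt (fun y : ℝ => y - z) 1 x :=
  (hasDerivAt_id x).sub_const z

theorem hasDerivAt_qshift (z : ℝ) (x : ℝ) :
    HasDerivAt (fun y : ℝ => (y - z) * |y - z|) (2 * |x - z|) x := by
  have h := (hasDerivAt_mul_abs (x - z)).comp x (hasDerivAt_sub_shift z x)
  rw [mul_one] at h; exact h

theorem hasDerivAt_u (hν : ν ≠ 0) (z : ℝ) (x : ℝ) :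
    HasDerivAt (fun y : ℝ => (y - z) / ν) (1 / ν) x := by
  simpa using (hasDerivAt_sub_shift z x).div_const ν

theorem hasDerivAt_phiBump_u (hν : ν ≠ 0) (z : ℝ) (x : ℝ) :
    HasDerivAt (fun y : ℝ => phiBump ((y - z) / ν)) (phi1 ((x - z) / ν) * (1 / ν)) x :=
  (hasDerivAt_phiBump _).comp x (hasDerivAt_u hν z x)

theorem hasDerivAt_phi1_u (hν : ν ≠ 0) (z : ℝ) (x : ℝ) :
    HasDerivAt (fun y : ℝ => phi1 ((y - z) / ν)) (phi2 ((x - z) / ν) * (1 / ν)) x :=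
  (hasDerivAt_phi1 _).comp x (hasDerivAt_u hν z x)

theorem hasDerivAt_phi2_u (hν : ν ≠ 0) (z : ℝ) (x : ℝ) :
    HasDerivAt (fun y : ℝ => phi2 ((y - z) / ν)) (phi3 ((x - z) / ν) * (1 / ν)) x :=
  (hasDerivAt_phi2 _).comp x (hasDerivAt_u hν z x)

theorem hasDerivAt_abs_shift {z x : ℝ} (hx : x ≠ z) :
    HasDerivAt (fun y : ℝ => |y - z|) (sgn (x - z)) x := by
  have h := (hasDerivAt_abs' (sub_ne_zero.2 hx)).comp x (hasDerivAt_sub_shift z x)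
  rw [mul_one] at h; exact h

theorem hasDerivAt_sgn_shift {z x : ℝ} (hx : x ≠ z) :
    HasDerivAt (fun y : ℝ => sgn (y - z)) 0 x :=
  (hasDerivAt_const x (sgn (x - z))).congr_of_eventuallyEq (sgn_eventually_eq hx)

theorem hasDerivAt_bump (hν : ν ≠ 0) (x : ℝ) :
    HasDerivAt (bump ν z a) (bump1 ν z a x) x := by
  have he : bump ν z a = fun y => a * ((y - z) * |y - z|) * phiBump ((y - z) / ν) := by
    funext y; unfold bump; ring
  rw [he]
  have h := ((hasDerivAt_qshift z x).const_mul a).mul (hasDerivAt_phiBump_u hν z x)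
  refine h.congr_deriv ?_
  unfold bump1
  field_simp

theorem hasDerivAt_bump1 (hν : ν ≠ 0) {x : ℝ} (hx : x ≠ z) :
    HasDerivAt (bump1 ν z a) (bump2 ν z a x) x := by
  have he : bump1 ν z a = fun y =>
      a * (2 * (|y - z| * phiBump ((y - z) / ν)) + ((y - z) * |y - z|) * phi1 ((y - z) / ν) / ν) := by
    funext y; unfold bump1; ring
  rw [he]
  have h1 : HasDerivAt (fun y : ℝ => |y - z| * phiBump ((y - z) / ν))
      (sgn (x - z) * phiBump ((x - z) / ν) + |x - z| * (phi1 ((x - z) / ν) * (1 / ν))) x :=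
    (hasDerivAt_abs_shift hx).mul (hasDerivAt_phiBump_u hν z x)
  have h2 : HasDerivAt (fun y : ℝ => ((y - z) * |y - z|) * phi1 ((y - z) / ν))
      (2 * |x - z| * phi1 ((x - z) / ν) + ((x - z) * |x - z|) * (phi2 ((x - z) / ν) * (1 / ν))) x :=
    (hasDerivAt_qshift z x).mul (hasDerivAt_phi1_u hν z x)
  have h := ((h1.const_mul 2).add (h2.div_const ν)).const_mul a
  refine h.congr_deriv ?_
  unfold bump2
  field_simp
  ring

theorem hasDerivAt_bump2 (hν : ν ≠ 0) {x : ℝ} (hx : x ≠ z) :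
    HasDerivAt (bump2 ν z a) (bump3 ν z a x) x := by
  have he : bump2 ν z a = fun y =>
      a * (2 * (sgn (y - z) * phiBump ((y - z) / ν)) + 4 * (|y - z| * phi1 ((y - z) / ν)) / ν
        + ((y - z) * |y - z|) * phi2 ((y - z) / ν) / ν ^ 2) := by
    funext y; unfold bump2; ring
  rw [he]
  have h1 : HasDerivAt (fun y : ℝ => sgn (y - z) * phiBump ((y - z) / ν))
      (0 * phiBump ((x - z) / ν) + sgn (x - z) * (phi1 ((x - z) / ν) * (1 / ν))) x :=
    (hasDerivAt_sgn_shift hx).mul (hasDerivAt_phiBump_u hν z x)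
  have h2 : HasDerivAt (fun y : ℝ => |y - z| * phi1 ((y - z) / ν))
      (sgn (x - z) * phi1 ((x - z) / ν) + |x - z| * (phi2 ((x - z) / ν) * (1 / ν))) x :=
    (hasDerivAt_abs_shift hx).mul (hasDerivAt_phi1_u hν z x)
  have h3 : HasDerivAt (fun y : ℝ => ((y - z) * |y - z|) * phi2 ((y - z) / ν))
      (2 * |x - z| * phi2 ((x - z) / ν) + ((x - z) * |x - z|) * (phi3 ((x - z) / ν) * (1 / ν))) x :=
    (hasDerivAt_qshift z x).mul (hasDerivAt_phi2_u hν z x)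
  have h := (((h1.const_mul 2).add ((h2.const_mul 4).div_const ν)).add
    (h3.div_const (ν ^ 2))).const_mul a
  refine h.congr_deriv ?_
  unfold bump3
  field_simp
  ring

/-- Support of the bumps. -/
theorem bump_eq_zero (hν : 0 < ν) {x : ℝ} (hx : ν < |x - z|) : bump ν z a x = 0 := by
  have h1 : 1 < |(x - z) / ν| := by
    rw [abs_div, abs_of_pos hν]
    rw [lt_div_iff₀ hν]; linarith
  unfold bump; rw [phiBump_vanish h1]; ring

theorem bump1_eq_zero (hν : 0 < ν) {x : ℝ} (hx : ν < |x - z|) : bump1 ν z a x = 0 := by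
  have h1 : 1 < |(x - z) / ν| := by
    rw [abs_div, abs_of_pos hν]
    rw [lt_div_iff₀ hν]; linarith
  unfold bump1; rw [phiBump_vanish h1, phi1_vanish h1]; ring

theorem bump2_eq_zero (hν : 0 < ν) {x : ℝ} (hx : ν < |x - z|) : bump2 ν z a x = 0 := by
  have h1 : 1 < |(x - z) / ν| := by
    rw [abs_div, abs_of_pos hν]
    rw [lt_div_iff₀ hν]; linarith
  unfold bump2; rw [phiBump_vanish h1, phi1_vanish h1, phi2_vanish h1]; ring

theorem bump3_eq_zero (hν : 0 < ν) {x : ℝ} (hx : ν < |x - z|) : bump3 ν z a x = 0 := by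
  have h1 : 1 < |(x - z) / ν| := by
    rw [abs_div, abs_of_pos hν]
    rw [lt_div_iff₀ hν]; linarith
  unfold bump3; rw [phi1_vanish h1, phi2_vanish h1, phi3_vanish h1]; ring

theorem bump_at_center : bump ν z a z = 0 := by unfold bump; simp

theorem bump1_at_center : bump1 ν z a z = 0 := by unfold bump1; simp

/-- Bounds. -/
theorem abs_bump_le (hν : 0 < ν) (x : ℝ) : |bump ν z a x| ≤ |a| * ν ^ 2 := by
  by_cases hx : ν < |x - z|
  · rw [bump_eq_zero hν hx, abs_zero]; positivity
  · push_neg at hx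
    unfold bump
    rw [abs_mul, abs_mul, abs_mul, abs_abs]
    have h1 := abs_phiBump_le ((x - z) / ν)
    have h2 : |x - z| ≤ ν := hx
    have h3 : (0:ℝ) ≤ |x - z| := abs_nonneg _
    calc |a| * |x - z| * |x - z| * |phiBump ((x - z) / ν)|
        ≤ |a| * |x - z| * |x - z| * 1 := by
          apply mul_le_mul_of_nonneg_left h1 (by positivity)
      _ = |a| * (|x - z| * |x - z|) := by ring
      _ ≤ |a| * (ν * ν) := by
          apply mul_le_mul_of_nonneg_left ?_ (abs_nonneg a)
          exact mul_le_mul h2 h2 h3 (le_of_lt hν)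
      _ = |a| * ν ^ 2 := by ring

theorem abs_bump1_le (hν : 0 < ν) (x : ℝ) : |bump1 ν z a x| ≤ 4 * |a| * ν := by
  by_cases hx : ν < |x - z|
  · rw [bump1_eq_zero hν hx, abs_zero]; positivity
  · push_neg at hx
    unfold bump1
    rw [abs_mul]
    have h1 := abs_phiBump_le ((x - z) / ν)
    have h2 := abs_phi1_le ((x - z) / ν)
    have h3 : (0:ℝ) ≤ |x - z| := abs_nonneg _
    have hb1 : |2 * |x - z| * phiBump ((x - z) / ν)| ≤ 2 * ν := by
      rw [abs_mul, abs_mul, abs_abs]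
      have : |(2:ℝ)| = 2 := by norm_num
      rw [this]
      calc 2 * |x - z| * |phiBump ((x - z) / ν)| ≤ 2 * |x - z| * 1 := by
            apply mul_le_mul_of_nonneg_left h1 (by positivity)
        _ = 2 * |x - z| := by ring
        _ ≤ 2 * ν := by linarith
    have hb2 : |(x - z) * |x - z| * phi1 ((x - z) / ν) / ν| ≤ 2 * ν := by
      rw [abs_div, abs_mul, abs_mul, abs_abs, abs_of_pos hν]
      rw [div_le_iff₀ hν]
      calc |x - z| * |x - z| * |phi1 ((x - z) / ν)| ≤ ν * ν * 2 := by
            apply mul_le_mul (mul_le_mul hx hx h3 (le_of_lt hν)) h2 (abs_nonneg _) (by positivity)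
        _ = 2 * ν * ν := by ring
    calc |a| * |2 * |x - z| * phiBump ((x - z) / ν) + (x - z) * |x - z| * phi1 ((x - z) / ν) / ν|
        ≤ |a| * (|2 * |x - z| * phiBump ((x - z) / ν)| + |(x - z) * |x - z| * phi1 ((x - z) / ν) / ν|) := by
          apply mul_le_mul_of_nonneg_left (abs_add_le _ _) (abs_nonneg a)
      _ ≤ |a| * (2 * ν + 2 * ν) := by
          apply mul_le_mul_of_nonneg_left (by linarith) (abs_nonneg a)
      _ = 4 * |a| * ν := by ring

theorem abs_bump2_le (hν : 0 < ν) (x : ℝ) : |bump2 ν z a x| ≤ 58 * |a| := by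
  by_cases hx : ν < |x - z|
  · rw [bump2_eq_zero hν hx, abs_zero]; positivity
  · push_neg at hx
    unfold bump2
    rw [abs_mul]
    have h1 := abs_phiBump_le ((x - z) / ν)
    have h2 := abs_phi1_le ((x - z) / ν)
    have h3 := abs_phi2_le ((x - z) / ν)
    have h0 : (0:ℝ) ≤ |x - z| := abs_nonneg _
    have hsg := abs_sgn_le (x - z)
    have hb1 : |2 * sgn (x - z) * phiBump ((x - z) / ν)| ≤ 2 := by
      rw [abs_mul, abs_mul]
      have : |(2:ℝ)| = 2 := by norm_num
      rw [this]
      nlinarith [abs_nonneg (sgn (x - z)), abs_nonneg (phiBump ((x - z) / ν))]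
    have hb2 : |4 * |x - z| * phi1 ((x - z) / ν) / ν| ≤ 8 := by
      rw [abs_div, abs_mul, abs_mul, abs_abs, abs_of_pos hν]
      rw [div_le_iff₀ hν]
      have : |(4:ℝ)| = 4 := by norm_num
      rw [this]
      nlinarith [abs_nonneg (phi1 ((x - z) / ν))]
    have hb3 : |(x - z) * |x - z| * phi2 ((x - z) / ν) / ν ^ 2| ≤ 48 := by
      rw [abs_div, abs_mul, abs_mul, abs_abs]
      have hν2 : |ν ^ 2| = ν ^ 2 := abs_of_pos (by positivity)
      rw [hν2, div_le_iff₀ (by positivity : (0:ℝ) < ν ^ 2)]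
      nlinarith [abs_nonneg (phi2 ((x - z) / ν)), mul_nonneg h0 h0]
    calc |a| * |2 * sgn (x - z) * phiBump ((x - z) / ν) + 4 * |x - z| * phi1 ((x - z) / ν) / ν
        + (x - z) * |x - z| * phi2 ((x - z) / ν) / ν ^ 2|
        ≤ |a| * (2 + 8 + 48) := by
          apply mul_le_mul_of_nonneg_left ?_ (abs_nonneg a)
          calc |2 * sgn (x - z) * phiBump ((x - z) / ν) + 4 * |x - z| * phi1 ((x - z) / ν) / ν
              + (x - z) * |x - z| * phi2 ((x - z) / ν) / ν ^ 2|
              ≤ |2 * sgn (x - z) * phiBump ((x - z) / ν) + 4 * |x - z| * phi1 ((x - z) / ν) / ν|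
                + |(x - z) * |x - z| * phi2 ((x - z) / ν) / ν ^ 2| := abs_add_le _ _
            _ ≤ (|2 * sgn (x - z) * phiBump ((x - z) / ν)| + |4 * |x - z| * phi1 ((x - z) / ν) / ν|)
                + |(x - z) * |x - z| * phi2 ((x - z) / ν) / ν ^ 2| := by
                  have := abs_add_le (2 * sgn (x - z) * phiBump ((x - z) / ν))
                    (4 * |x - z| * phi1 ((x - z) / ν) / ν)
                  linarith
            _ ≤ 2 + 8 + 48 := by linarith
      _ = 58 * |a| := by ring

theorem abs_bump3_le (hν : 0 < ν) (x : ℝ) : |bump3 ν z a x| ≤ 492 * |a| / ν := by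
  by_cases hx : ν < |x - z|
  · rw [bump3_eq_zero hν hx, abs_zero]; positivity
  · push_neg at hx
    unfold bump3
    rw [abs_mul]
    have h1 := abs_phi1_le ((x - z) / ν)
    have h2 := abs_phi2_le ((x - z) / ν)
    have h3 := abs_phi3_le ((x - z) / ν)
    have h0 : (0:ℝ) ≤ |x - z| := abs_nonneg _
    have hsg := abs_sgn_le (x - z)
    have hb1 : |6 * sgn (x - z) * phi1 ((x - z) / ν) / ν| ≤ 12 / ν := by
      rw [abs_div, abs_mul, abs_mul, abs_of_pos hν]
      rw [div_le_div_iff_of_pos_right hν]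
      have : |(6:ℝ)| = 6 := by norm_num
      rw [this]
      nlinarith [abs_nonneg (sgn (x - z)), abs_nonneg (phi1 ((x - z) / ν))]
    have hb2 : |6 * |x - z| * phi2 ((x - z) / ν) / ν ^ 2| ≤ 288 / ν := by
      rw [abs_div, abs_mul, abs_mul, abs_abs]
      have hν2 : |ν ^ 2| = ν ^ 2 := abs_of_pos (by positivity)
      rw [hν2]
      rw [div_le_div_iff₀ (by positivity) hν]
      have : |(6:ℝ)| = 6 := by norm_num
      rw [this]
      have hgoal : 6 * |x - z| * |phi2 ((x - z) / ν)| ≤ 288 * ν := by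
        nlinarith [abs_nonneg (phi2 ((x - z) / ν))]
      nlinarith [sq_nonneg ν, abs_nonneg (phi2 ((x - z) / ν))]
    have hb3 : |(x - z) * |x - z| * phi3 ((x - z) / ν) / ν ^ 3| ≤ 192 / ν := by
      rw [abs_div, abs_mul, abs_mul, abs_abs]
      have hν3 : |ν ^ 3| = ν ^ 3 := abs_of_pos (by positivity)
      rw [hν3]
      rw [div_le_div_iff₀ (by positivity) hν]
      have e1 : |x - z| * |x - z| ≤ ν * ν := mul_le_mul hx hx h0 hν.le
      have e2 : |x - z| * |x - z| * |phi3 ((x - z) / ν)| ≤ ν * ν * 192 :=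
        mul_le_mul e1 h3 (abs_nonneg _) (by positivity)
      nlinarith [mul_le_mul_of_nonneg_right e2 hν.le]
    calc |a| * |6 * sgn (x - z) * phi1 ((x - z) / ν) / ν + 6 * |x - z| * phi2 ((x - z) / ν) / ν ^ 2
        + (x - z) * |x - z| * phi3 ((x - z) / ν) / ν ^ 3|
        ≤ |a| * (12 / ν + 288 / ν + 192 / ν) := by
          apply mul_le_mul_of_nonneg_left ?_ (abs_nonneg a)
          calc |6 * sgn (x - z) * phi1 ((x - z) / ν) / ν + 6 * |x - z| * phi2 ((x - z) / ν) / ν ^ 2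
              + (x - z) * |x - z| * phi3 ((x - z) / ν) / ν ^ 3|
              ≤ |6 * sgn (x - z) * phi1 ((x - z) / ν) / ν + 6 * |x - z| * phi2 ((x - z) / ν) / ν ^ 2|
                + |(x - z) * |x - z| * phi3 ((x - z) / ν) / ν ^ 3| := abs_add_le _ _
            _ ≤ (|6 * sgn (x - z) * phi1 ((x - z) / ν) / ν|
                + |6 * |x - z| * phi2 ((x - z) / ν) / ν ^ 2|)
                + |(x - z) * |x - z| * phi3 ((x - z) / ν) / ν ^ 3| := by
                  have := abs_add_le (6 * sgn (x - z) * phi1 ((x - z) / ν) / ν)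
                    (6 * |x - z| * phi2 ((x - z) / ν) / ν ^ 2)
                  linarith
            _ ≤ 12 / ν + 288 / ν + 192 / ν := by linarith
      _ = 492 * |a| / ν := by ring

end Lemma42Bump


section Lemma42BumpLip
open scoped Topology

variable {ν z a : ℝ}

theorem LipOn.congr {s : Set ℝ} {f g : ℝ → ℝ} (h : ∀ x ∈ s, f x = g x) (hg : LipOn s g) :
    LipOn s f := by
  obtain ⟨C, hC0, hC⟩ := hg
  exact ⟨C, hC0, fun x hx y hy => by rw [h x hx, h y hy]; exact hC x hx y hy⟩

theorem LipOn.mul_bdd' {s : Set ℝ} {f g : ℝ → ℝ} (hf : LipOn s f)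
    (hM : ∃ M, 0 ≤ M ∧ ∀ x ∈ s, |f x| ≤ M) (hg : LipOn s g)
    (hB : ∃ B, 0 ≤ B ∧ ∀ x ∈ s, |g x| ≤ B) : LipOn s (fun x => f x * g x) := by
  obtain ⟨Lf, hLf0, hLf⟩ := hf
  obtain ⟨Lg, hLg0, hLg⟩ := hg
  obtain ⟨M, hM0, hM'⟩ := hM
  obtain ⟨B, hB0, hB'⟩ := hB
  exact LipOn.mul_bdd hLf0 hLg0 hM0 hB0 hLf hM' hB' hLg

/-- Lipschitz building blocks. -/
theorem lipOn_clampA (hν : 0 < ν) (z : ℝ) : LipOn Set.univ (fun x => |clamp ν (x - z)|) := by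
  refine ⟨1, zero_le_one, fun x _ y _ => ?_⟩
  have h1 := abs_abs_sub_abs_le_abs_sub (clamp ν (x - z)) (clamp ν (y - z))
  have h2 := clamp_lip ν (x - z) (y - z)
  have h3 : x - z - (y - z) = x - y := by ring
  rw [h3] at h2
  linarith

theorem lipOn_clampQ (hν : 0 < ν) (z : ℝ) :
    LipOn Set.univ (fun x => clamp ν (x - z) * |clamp ν (x - z)|) := by
  apply LipOn.mul_bdd' (f := fun x => clamp ν (x - z)) (g := fun x => |clamp ν (x - z)|)
  · refine ⟨1, zero_le_one, fun x _ y _ => ?_⟩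
    calc |clamp ν (x - z) - clamp ν (y - z)| ≤ 1 * |(x - z) - (y - z)| := clamp_lip ν _ _
      _ = 1 * |x - y| := by ring_nf
  · exact ⟨ν, hν.le, fun x _ => abs_clamp_le hν.le _⟩
  · exact lipOn_clampA hν z
  · exact ⟨ν, hν.le, fun x _ => by rw [abs_abs]; exact abs_clamp_le hν.le _⟩

theorem lipOn_phi_comp (hν : 0 < ν) (z : ℝ) {f : ℝ → ℝ} (hf : LipOn Set.univ f) :
    LipOn Set.univ (fun x => f ((x - z) / ν)) := by
  apply hf.comp (f := fun x => (x - z) / ν) ?_ (fun x _ => Set.mem_univ _)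
  refine ⟨1 / ν, by positivity, fun x _ y _ => ?_⟩
  have h : (x - z) / ν - (y - z) / ν = (x - y) / ν := by ring
  rw [h, abs_div, abs_of_pos hν]
  exact le_of_eq (by ring)

/-- Clamp rewriting identities. -/
theorem clamp_abs_mul_eq {f : ℝ → ℝ} (hvan : ∀ u, 1 < |u| → f u = 0) (hν : 0 < ν)
    (z x : ℝ) : |x - z| * f ((x - z) / ν) = |clamp ν (x - z)| * f ((x - z) / ν) := by
  by_cases h : |x - z| ≤ ν
  · rw [clamp_eq h]
  · push_neg at h
    have h1 : 1 < |(x - z) / ν| := by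
      rw [abs_div, abs_of_pos hν, lt_div_iff₀ hν]; linarith
    rw [hvan _ h1]; ring

theorem clamp_q_mul_eq {f : ℝ → ℝ} (hvan : ∀ u, 1 < |u| → f u = 0) (hν : 0 < ν)
    (z x : ℝ) : (x - z) * |x - z| * f ((x - z) / ν)
      = clamp ν (x - z) * |clamp ν (x - z)| * f ((x - z) / ν) := by
  by_cases h : |x - z| ≤ ν
  · rw [clamp_eq h]
  · push_neg at h
    have h1 : 1 < |(x - z) / ν| := by
      rw [abs_div, abs_of_pos hν, lt_div_iff₀ hν]; linarith
    rw [hvan _ h1]; ring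

theorem lipOn_bump1 (hν : 0 < ν) : LipOn Set.univ (bump1 ν z a) := by
  have he : ∀ x, bump1 ν z a x = (a * 2) * (|clamp ν (x - z)| * phiBump ((x - z) / ν))
      + (a * (1 / ν)) * ((clamp ν (x - z) * |clamp ν (x - z)|) * phi1 ((x - z) / ν)) := by
    intro x
    unfold bump1
    rw [← clamp_abs_mul_eq (fun u hu => phiBump_vanish hu) hν z x,
        ← clamp_q_mul_eq (fun u hu => phi1_vanish hu) hν z x]
    field_simp
  apply LipOn.congr (fun x _ => he x)
  apply LipOn.add
  · apply LipOn.const_mul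
    apply LipOn.mul_bdd' (lipOn_clampA hν z)
      ⟨ν, hν.le, fun x _ => by rw [abs_abs]; exact abs_clamp_le hν.le _⟩
      (lipOn_phi_comp hν z lipOn_phiBump)
      ⟨1, zero_le_one, fun x _ => abs_phiBump_le _⟩
  · apply LipOn.const_mul
    apply LipOn.mul_bdd' (lipOn_clampQ hν z) ⟨ν ^ 2, by positivity, fun x _ => ?_⟩
      (lipOn_phi_comp hν z lipOn_phi1)
      ⟨2, by norm_num, fun x _ => abs_phi1_le _⟩
    rw [abs_mul, abs_abs]
    calc |clamp ν (x - z)| * |clamp ν (x - z)| ≤ ν * ν :=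
          mul_le_mul (abs_clamp_le hν.le _) (abs_clamp_le hν.le _) (abs_nonneg _) hν.le
      _ = ν ^ 2 := by ring

/-- Constant-sign versions of `bump2`, `bump3`. -/
def bump2c (ν z a ε x : ℝ) : ℝ :=
  a * (2 * ε * phiBump ((x - z) / ν) + 4 * |x - z| * phi1 ((x - z) / ν) / ν
    + (x - z) * |x - z| * phi2 ((x - z) / ν) / ν ^ 2)

def bump3c (ν z a ε x : ℝ) : ℝ :=
  a * (6 * ε * phi1 ((x - z) / ν) / ν + 6 * |x - z| * phi2 ((x - z) / ν) / ν ^ 2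
    + (x - z) * |x - z| * phi3 ((x - z) / ν) / ν ^ 3)

theorem lipOn_bump2c (hν : 0 < ν) (ε : ℝ) : LipOn Set.univ (bump2c ν z a ε) := by
  have he : ∀ x, bump2c ν z a ε x = a * (2 * ε) * phiBump ((x - z) / ν)
      + a * (4 / ν) * (|clamp ν (x - z)| * phi1 ((x - z) / ν))
      + a * (1 / ν ^ 2) * ((clamp ν (x - z) * |clamp ν (x - z)|) * phi2 ((x - z) / ν)) := by
    intro x
    unfold bump2c
    rw [← clamp_abs_mul_eq (fun u hu => phi1_vanish hu) hν z x,
        ← clamp_q_mul_eq (fun u hu => phi2_vanish hu) hν z x]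
    field_simp
  apply LipOn.congr (fun x _ => he x)
  apply LipOn.add
  apply LipOn.add
  · exact (lipOn_phi_comp hν z lipOn_phiBump).const_mul _
  · apply LipOn.const_mul
    apply LipOn.mul_bdd' (lipOn_clampA hν z)
      ⟨ν, hν.le, fun x _ => by rw [abs_abs]; exact abs_clamp_le hν.le _⟩
      (lipOn_phi_comp hν z lipOn_phi1)
      ⟨2, by norm_num, fun x _ => abs_phi1_le _⟩
  · apply LipOn.const_mul
    apply LipOn.mul_bdd' (lipOn_clampQ hν z) ⟨ν ^ 2, by positivity, fun x _ => ?_⟩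
      (lipOn_phi_comp hν z lipOn_phi2)
      ⟨48, by norm_num, fun x _ => abs_phi2_le _⟩
    rw [abs_mul, abs_abs]
    calc |clamp ν (x - z)| * |clamp ν (x - z)| ≤ ν * ν :=
          mul_le_mul (abs_clamp_le hν.le _) (abs_clamp_le hν.le _) (abs_nonneg _) hν.le
      _ = ν ^ 2 := by ring

theorem lipOn_bump3c (hν : 0 < ν) (ε : ℝ) : LipOn Set.univ (bump3c ν z a ε) := by
  have he : ∀ x, bump3c ν z a ε x = a * (6 * ε / ν) * phi1 ((x - z) / ν)
      + a * (6 / ν ^ 2) * (|clamp ν (x - z)| * phi2 ((x - z) / ν))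
      + a * (1 / ν ^ 3) * ((clamp ν (x - z) * |clamp ν (x - z)|) * phi3 ((x - z) / ν)) := by
    intro x
    unfold bump3c
    rw [← clamp_abs_mul_eq (fun u hu => phi2_vanish hu) hν z x,
        ← clamp_q_mul_eq (fun u hu => phi3_vanish hu) hν z x]
    field_simp
  apply LipOn.congr (fun x _ => he x)
  apply LipOn.add
  apply LipOn.add
  · exact (lipOn_phi_comp hν z lipOn_phi1).const_mul _
  · apply LipOn.const_mul
    apply LipOn.mul_bdd' (lipOn_clampA hν z)
      ⟨ν, hν.le, fun x _ => by rw [abs_abs]; exact abs_clamp_le hν.le _⟩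
      (lipOn_phi_comp hν z lipOn_phi2)
      ⟨48, by norm_num, fun x _ => abs_phi2_le _⟩
  · apply LipOn.const_mul
    apply LipOn.mul_bdd' (lipOn_clampQ hν z) ⟨ν ^ 2, by positivity, fun x _ => ?_⟩
      (lipOn_phi_comp hν z lipOn_phi3)
      ⟨192, by norm_num, fun x _ => abs_phi3_le _⟩
    rw [abs_mul, abs_abs]
    calc |clamp ν (x - z)| * |clamp ν (x - z)| ≤ ν * ν :=
          mul_le_mul (abs_clamp_le hν.le _) (abs_clamp_le hν.le _) (abs_nonneg _) hν.le
      _ = ν ^ 2 := by ring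

theorem bump2_eq_bump2c {x : ℝ} : bump2 ν z a x = bump2c ν z a (sgn (x - z)) x := rfl

theorem bump3_eq_bump3c {x : ℝ} : bump3 ν z a x = bump3c ν z a (sgn (x - z)) x := rfl

theorem sgn_of_lt {x : ℝ} (h : x < z) : sgn (x - z) = -1 := by
  unfold sgn; rw [if_pos (by linarith : x - z < 0)]

theorem sgn_of_gt {x : ℝ} (h : z < x) : sgn (x - z) = 1 := by
  unfold sgn; rw [if_neg (by linarith : ¬ x - z < 0)]

theorem lipOn_bump2 (hν : 0 < ν) {s : Set ℝ}
    (hside : (∀ x ∈ s, x < z) ∨ (∀ x ∈ s, z < x)) : LipOn s (bump2 ν z a) := by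
  rcases hside with h | h
  · apply LipOn.congr (g := bump2c ν z a (-1)) (fun x hx => ?_)
      ((lipOn_bump2c hν (-1)).mono (Set.subset_univ s))
    rw [bump2_eq_bump2c, sgn_of_lt (h x hx)]
  · apply LipOn.congr (g := bump2c ν z a 1) (fun x hx => ?_)
      ((lipOn_bump2c hν 1).mono (Set.subset_univ s))
    rw [bump2_eq_bump2c, sgn_of_gt (h x hx)]

theorem lipOn_bump3 (hν : 0 < ν) {s : Set ℝ}
    (hside : (∀ x ∈ s, x < z) ∨ (∀ x ∈ s, z < x)) : LipOn s (bump3 ν z a) := by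
  rcases hside with h | h
  · apply LipOn.congr (g := bump3c ν z a (-1)) (fun x hx => ?_)
      ((lipOn_bump3c hν (-1)).mono (Set.subset_univ s))
    rw [bump3_eq_bump3c, sgn_of_lt (h x hx)]
  · apply LipOn.congr (g := bump3c ν z a 1) (fun x hx => ?_)
      ((lipOn_bump3c hν 1).mono (Set.subset_univ s))
    rw [bump3_eq_bump3c, sgn_of_gt (h x hx)]

/-- Continuity facts. -/
theorem continuous_phiBump : Continuous phiBump :=
  continuous_iff_continuousAt.2 fun x => (hasDerivAt_phiBump x).continuousAt

theorem continuous_phi1 : Continuous phi1 :=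
  continuous_iff_continuousAt.2 fun x => (hasDerivAt_phi1 x).continuousAt

theorem continuous_phi2 : Continuous phi2 :=
  continuous_iff_continuousAt.2 fun x => (hasDerivAt_phi2 x).continuousAt

theorem continuous_bump2c (hν : ν ≠ 0) (ε : ℝ) : Continuous (bump2c ν z a ε) := by
  have c1 : Continuous fun x : ℝ => (x - z) / ν := (continuous_id.sub continuous_const).div_const ν
  have cabs : Continuous fun x : ℝ => |x - z| := (continuous_id.sub continuous_const).abs
  have cB : Continuous fun x : ℝ => phiBump ((x - z) / ν) := continuous_phiBump.comp c1
  have cP1 : Continuous fun x : ℝ => phi1 ((x - z) / ν) := continuous_phi1.comp c1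
  have cP2 : Continuous fun x : ℝ => phi2 ((x - z) / ν) := continuous_phi2.comp c1
  unfold bump2c
  apply Continuous.mul continuous_const
  apply Continuous.add
  apply Continuous.add
  · exact continuous_const.mul cB
  · exact ((continuous_const.mul cabs).mul cP1).div_const ν
  · exact (((continuous_id.sub continuous_const).mul cabs).mul cP2).div_const (ν ^ 2)

theorem bump2c_at_center (hν : ν ≠ 0) (ε : ℝ) : bump2c ν z a ε z = 2 * ε * a := by
  unfold bump2c
  simp [phiBump_zero]
  ring

theorem tendsto_bump2_left (hν : 0 < ν) :
    Tendsto (bump2 ν z a) (𝓝[<] z) (𝓝 (-2 * a)) := by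
  have h1 : Tendsto (bump2c ν z a (-1)) (𝓝[<] z) (𝓝 (-2 * a)) := by
    have := ((continuous_bump2c (z := z) (a := a) hν.ne' (-1)).continuousAt (x := z)).tendsto
    rw [bump2c_at_center hν.ne'] at this
    have h2 : Tendsto (bump2c ν z a (-1)) (𝓝[<] z) (𝓝 (2 * (-1) * a)) :=
      this.mono_left nhdsWithin_le_nhds
    convert h2 using 2
    ring
  apply Tendsto.congr' ?_ h1
  filter_upwards [self_mem_nhdsWithin] with x hx
  rw [bump2_eq_bump2c, sgn_of_lt hx]

theorem tendsto_bump2_right (hν : 0 < ν) :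
    Tendsto (bump2 ν z a) (𝓝[>] z) (𝓝 (2 * a)) := by
  have h1 : Tendsto (bump2c ν z a 1) (𝓝[>] z) (𝓝 (2 * a)) := by
    have := ((continuous_bump2c (z := z) (a := a) hν.ne' 1).continuousAt (x := z)).tendsto
    rw [bump2c_at_center hν.ne'] at this
    have h2 : Tendsto (bump2c ν z a 1) (𝓝[>] z) (𝓝 (2 * 1 * a)) :=
      this.mono_left nhdsWithin_le_nhds
    convert h2 using 2
    ring
  apply Tendsto.congr' ?_ h1
  filter_upwards [self_mem_nhdsWithin] with x hx
  rw [bump2_eq_bump2c, sgn_of_gt hx]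

theorem bump2_eventually_zero (hν : 0 < ν) {w : ℝ} (hw : ν < |w - z|) :
    ∀ᶠ x in 𝓝 w, bump2 ν z a x = 0 := by
  have hopen : IsOpen {x : ℝ | ν < |x - z|} :=
    isOpen_lt continuous_const ((continuous_id.sub continuous_const).abs)
  filter_upwards [hopen.mem_nhds hw] with x hx
  exact bump2_eq_zero hν hx

end Lemma42BumpLip


section Lemma42Sum
open scoped Topology

variable {k : ℕ}

/-- First, second, third derivative candidates of `Gmap`. -/
def G1f (ξ α : Fin k → ℝ) (ν x : ℝ) : ℝ := 1 + ∑ j, bump1 ν (ξ j) (α j) x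
def G2f (ξ α : Fin k → ℝ) (ν x : ℝ) : ℝ := ∑ j, bump2 ν (ξ j) (α j) x
def G3f (ξ α : Fin k → ℝ) (ν x : ℝ) : ℝ := ∑ j, bump3 ν (ξ j) (α j) x

variable {ξ α : Fin k → ℝ} {ν : ℝ}

theorem Gmap_eq_bump : Gmap ξ α ν = fun x => x + ∑ j, bump ν (ξ j) (α j) x := rfl

theorem hasDerivAt_Gmap (hν : 0 < ν) (x : ℝ) :
    HasDerivAt (Gmap ξ α ν) (G1f ξ α ν x) x := by
  rw [Gmap_eq_bump]
  have h := HasDerivAt.fun_sum (u := Finset.univ)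
    (A := fun j => bump ν (ξ j) (α j)) (A' := fun j => bump1 ν (ξ j) (α j) x)
    (fun j _ => hasDerivAt_bump hν.ne' x)
  have h2 := (hasDerivAt_id x).add h
  have e : G1f ξ α ν x = 1 + ∑ j, bump1 ν (ξ j) (α j) x := rfl
  rw [e]
  exact h2

theorem hasDerivAt_G1f (hν : 0 < ν) {x : ℝ} (hx : ∀ j, x ≠ ξ j) :
    HasDerivAt (G1f ξ α ν) (G2f ξ α ν x) x := by
  have h := HasDerivAt.fun_sum (u := Finset.univ)
    (A := fun j => bump1 ν (ξ j) (α j)) (A' := fun j => bump2 ν (ξ j) (α j) x)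
    (fun j _ => hasDerivAt_bump1 hν.ne' (hx j))
  have := (hasDerivAt_const x (1:ℝ)).add h
  unfold G1f G2f
  refine this.congr_deriv ?_
  ring

theorem hasDerivAt_G2f (hν : 0 < ν) {x : ℝ} (hx : ∀ j, x ≠ ξ j) :
    HasDerivAt (G2f ξ α ν) (G3f ξ α ν x) x :=
  HasDerivAt.fun_sum (fun j _ => hasDerivAt_bump2 hν.ne' (hx j))

/-- At most one bump is active. -/
theorem bump_disjoint (hν : 0 < ν) (hgap : ∀ i j : Fin k, i ≠ j → 2 * ν < |ξ i - ξ j|)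
    {x : ℝ} {i j : Fin k} (hij : i ≠ j) (hi : |x - ξ i| ≤ ν) (hj : |x - ξ j| ≤ ν) : False := by
  have h := hgap i j hij
  have : |ξ i - ξ j| ≤ |x - ξ i| + |x - ξ j| := by
    have := abs_sub_abs_le_abs_sub (x - ξ j) (x - ξ i)
    have h2 := abs_sub (x - ξ i) (x - ξ j)
    calc |ξ i - ξ j| = |(x - ξ j) - (x - ξ i)| := by ring_nf
      _ ≤ |x - ξ j| + |x - ξ i| := abs_sub _ _
      _ = |x - ξ i| + |x - ξ j| := by ring
  linarith

/-- Sum collapse: a bound valid for each single bump is valid for the sum. -/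
theorem sum_bump_bound {F : Fin k → ℝ → ℝ} {c : ℝ} (hc : 0 ≤ c) (hν : 0 < ν)
    (hgap : ∀ i j : Fin k, i ≠ j → 2 * ν < |ξ i - ξ j|)
    (hzero : ∀ j x, ν < |x - ξ j| → F j x = 0)
    (hbound : ∀ j x, |F j x| ≤ c) (x : ℝ) : |∑ j, F j x| ≤ c := by
  by_cases h : ∃ i : Fin k, |x - ξ i| ≤ ν
  · obtain ⟨i, hi⟩ := h
    have hsum : ∑ j, F j x = F i x := by
      apply Finset.sum_eq_single
      · intro j _ hj
        apply hzero
        by_contra hc'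
        push_neg at hc'
        exact bump_disjoint hν hgap hj hc' hi
      · intro h'
        exact absurd (Finset.mem_univ i) h'
    rw [hsum]
    exact hbound i x
  · push_neg at h
    have hsum : ∑ j, F j x = 0 := by
      apply Finset.sum_eq_zero
      intro j _
      exact hzero j x (h j)
    rw [hsum, abs_zero]
    exact hc

theorem abs_G1f_sub_one_le (hν : 0 < ν) (hsmall : ∀ j, |α j| * ν ≤ 1 / 8)
    (hgap : ∀ i j : Fin k, i ≠ j → 2 * ν < |ξ i - ξ j|) (x : ℝ) :
    |G1f ξ α ν x - 1| ≤ 1 / 2 := by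
  unfold G1f
  have e : 1 + ∑ j, bump1 ν (ξ j) (α j) x - 1 = ∑ j, bump1 ν (ξ j) (α j) x := by ring
  rw [e]
  apply sum_bump_bound (by norm_num) hν hgap (fun j x hx => bump1_eq_zero hν hx)
  intro j y
  calc |bump1 ν (ξ j) (α j) y| ≤ 4 * |α j| * ν := abs_bump1_le hν y
    _ = 4 * (|α j| * ν) := by ring
    _ ≤ 4 * (1 / 8) := by linarith [hsmall j]
    _ = 1 / 2 := by norm_num

theorem G1f_pos (hν : 0 < ν) (hsmall : ∀ j, |α j| * ν ≤ 1 / 8)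
    (hgap : ∀ i j : Fin k, i ≠ j → 2 * ν < |ξ i - ξ j|) (x : ℝ) :
    1 / 2 ≤ G1f ξ α ν x := by
  have := abs_G1f_sub_one_le (α := α) hν hsmall hgap x
  rcases abs_le.1 this with ⟨h1, _⟩
  linarith

theorem G1f_le (hν : 0 < ν) (hsmall : ∀ j, |α j| * ν ≤ 1 / 8)
    (hgap : ∀ i j : Fin k, i ≠ j → 2 * ν < |ξ i - ξ j|) (x : ℝ) :
    G1f ξ α ν x ≤ 3 / 2 := by
  have := abs_G1f_sub_one_le (α := α) hν hsmall hgap x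
  rcases abs_le.1 this with ⟨_, h2⟩
  linarith

theorem abs_sumbump_le (hν : 0 < ν) (hsmall : ∀ j, |α j| * ν ≤ 1 / 8)
    (hgap : ∀ i j : Fin k, i ≠ j → 2 * ν < |ξ i - ξ j|) (x : ℝ) :
    |∑ j, bump ν (ξ j) (α j) x| ≤ ν := by
  apply sum_bump_bound hν.le hν hgap (fun j x hx => bump_eq_zero hν hx)
  intro j y
  calc |bump ν (ξ j) (α j) y| ≤ |α j| * ν ^ 2 := abs_bump_le hν y
    _ = |α j| * ν * ν := by ring
    _ ≤ (1 / 8) * ν := by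
        apply mul_le_mul_of_nonneg_right (hsmall j) hν.le
    _ ≤ ν := by linarith

theorem abs_G2f_le (hν : 0 < ν) (hsmall : ∀ j, |α j| * ν ≤ 1 / 8)
    (hgap : ∀ i j : Fin k, i ≠ j → 2 * ν < |ξ i - ξ j|) (x : ℝ) :
    |G2f ξ α ν x| ≤ 8 / ν := by
  apply sum_bump_bound (by positivity) hν hgap (fun j x hx => bump2_eq_zero hν hx)
  intro j y
  calc |bump2 ν (ξ j) (α j) y| ≤ 58 * |α j| := abs_bump2_le hν y
    _ ≤ 8 / ν := by
        rw [le_div_iff₀ hν]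
        nlinarith [hsmall j]

theorem abs_G3f_le (hν : 0 < ν) (hsmall : ∀ j, |α j| * ν ≤ 1 / 8)
    (hgap : ∀ i j : Fin k, i ≠ j → 2 * ν < |ξ i - ξ j|) (x : ℝ) :
    |G3f ξ α ν x| ≤ 62 / ν ^ 2 := by
  apply sum_bump_bound (by positivity) hν hgap (fun j x hx => bump3_eq_zero hν hx)
  intro j y
  calc |bump3 ν (ξ j) (α j) y| ≤ 492 * |α j| / ν := abs_bump3_le hν y
    _ ≤ 62 / ν ^ 2 := by
        rw [div_le_div_iff₀ hν (by positivity : (0:ℝ) < ν ^ 2)]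
        nlinarith [mul_le_mul_of_nonneg_right (hsmall j) hν.le, hν.le]

/-- Supports of `G2f`, `G3f` and `G1f - 1`. -/
theorem G2f_support (hν : 0 < ν) {x : ℝ} (hx : ∀ j, ν < |x - ξ j|) : G2f ξ α ν x = 0 :=
  Finset.sum_eq_zero fun j _ => bump2_eq_zero hν (hx j)

theorem G3f_support (hν : 0 < ν) {x : ℝ} (hx : ∀ j, ν < |x - ξ j|) : G3f ξ α ν x = 0 :=
  Finset.sum_eq_zero fun j _ => bump3_eq_zero hν (hx j)

theorem G1f_sub_one_support (hν : 0 < ν) {x : ℝ} (hx : ∀ j, ν < |x - ξ j|) :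
    G1f ξ α ν x - 1 = 0 := by
  unfold G1f
  rw [Finset.sum_eq_zero fun j _ => bump1_eq_zero hν (hx j)]
  ring

/-- Lipschitz of finite sums. -/
theorem LipOn.finsum {s : Set ℝ} {I : Finset (Fin k)} {F : Fin k → ℝ → ℝ}
    (h : ∀ i ∈ I, LipOn s (F i)) : LipOn s (fun x => ∑ i ∈ I, F i x) := by
  classical
  induction I using Finset.induction_on with
  | empty => simpa using LipOn.const s 0
  | insert j I' hnotmem ih =>
      have h1 : LipOn s (F j) := h j (Finset.mem_insert_self _ _)
      have h2 : LipOn s (fun x => ∑ i ∈ I', F i x) :=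
        ih (fun i hi => h i (Finset.mem_insert_of_mem hi))
      have := h1.add h2
      apply LipOn.congr (fun x _ => ?_) this
      rw [Finset.sum_insert hnotmem]

theorem lipOn_G1f (hν : 0 < ν) : LipOn Set.univ (G1f ξ α ν) := by
  have h : LipOn Set.univ (fun x => ∑ j : Fin k, bump1 ν (ξ j) (α j) x) :=
    LipOn.finsum (fun j _ => lipOn_bump1 hν)
  have := (LipOn.const Set.univ 1).add h
  apply LipOn.congr (fun x _ => ?_) this
  rfl

theorem lipOn_G2f (hν : 0 < ν) {s : Set ℝ}
    (hside : ∀ j : Fin k, (∀ x ∈ s, x < ξ j) ∨ (∀ x ∈ s, ξ j < x)) :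
    LipOn s (G2f ξ α ν) :=
  LipOn.finsum (fun j _ => lipOn_bump2 hν (hside j))

theorem lipOn_G3f (hν : 0 < ν) {s : Set ℝ}
    (hside : ∀ j : Fin k, (∀ x ∈ s, x < ξ j) ∨ (∀ x ∈ s, ξ j < x)) :
    LipOn s (G3f ξ α ν) :=
  LipOn.finsum (fun j _ => lipOn_bump3 hν (hside j))

end Lemma42Sum


section Lemma42Inv
open scoped Topology

variable {k : ℕ} {ξ α : Fin k → ℝ} {ν : ℝ}

theorem E_contract (hν : 0 < ν) (hsmall : ∀ j, |α j| * ν ≤ 1 / 8)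
    (hgap : ∀ i j : Fin k, i ≠ j → 2 * ν < |ξ i - ξ j|) (x y : ℝ) :
    |(∑ j, bump ν (ξ j) (α j) x) - ∑ j, bump ν (ξ j) (α j) y| ≤ 1 / 2 * |x - y| := by
  have hbd : ∀ w : ℝ, |∑ j, bump1 ν (ξ j) (α j) w| ≤ 1 / 2 := by
    intro w
    apply sum_bump_bound (by norm_num) hν hgap (fun j x hx => bump1_eq_zero hν hx)
    intro j y
    calc |bump1 ν (ξ j) (α j) y| ≤ 4 * |α j| * ν := abs_bump1_le hν y
      _ = 4 * (|α j| * ν) := by ring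
      _ ≤ 1 / 2 := by linarith [hsmall j]
  have := convex_univ.norm_image_sub_le_of_norm_hasDerivWithin_le
    (f := fun x => ∑ j, bump ν (ξ j) (α j) x)
    (f' := fun x => ∑ j, bump1 ν (ξ j) (α j) x)
    (fun w _ => (HasDerivAt.fun_sum (fun j _ => hasDerivAt_bump hν.ne' w)).hasDerivWithinAt)
    (fun w _ => by simpa [Real.norm_eq_abs] using hbd w) (Set.mem_univ y) (Set.mem_univ x)
  simpa [Real.norm_eq_abs] using this

theorem Gmap_lower (hν : 0 < ν) (hsmall : ∀ j, |α j| * ν ≤ 1 / 8)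
    (hgap : ∀ i j : Fin k, i ≠ j → 2 * ν < |ξ i - ξ j|) (x y : ℝ) :
    1 / 2 * |x - y| ≤ |Gmap ξ α ν x - Gmap ξ α ν y| := by
  have hE := E_contract hν hsmall hgap x y
  have e : x - y = (Gmap ξ α ν x - Gmap ξ α ν y)
      - ((∑ j, bump ν (ξ j) (α j) x) - ∑ j, bump ν (ξ j) (α j) y) := by
    rw [Gmap_eq_bump]; ring
  have h1 : |x - y| ≤ |Gmap ξ α ν x - Gmap ξ α ν y|
      + |(∑ j, bump ν (ξ j) (α j) x) - ∑ j, bump ν (ξ j) (α j) y| := by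
    rw [e]; exact abs_sub _ _
  linarith

theorem Gmap_strictMono (hν : 0 < ν) (hsmall : ∀ j, |α j| * ν ≤ 1 / 8)
    (hgap : ∀ i j : Fin k, i ≠ j → 2 * ν < |ξ i - ξ j|) :
    StrictMono (Gmap ξ α ν) := by
  intro x y hxy
  have hE := E_contract hν hsmall hgap y x
  have habs := abs_le.1 hE
  have e : Gmap ξ α ν y - Gmap ξ α ν x = (y - x)
      + ((∑ j, bump ν (ξ j) (α j) y) - ∑ j, bump ν (ξ j) (α j) x) := by
    rw [Gmap_eq_bump]; ring
  have hyx : |y - x| = y - x := abs_of_pos (by linarith)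
  rw [hyx] at habs
  have : 0 < Gmap ξ α ν y - Gmap ξ α ν x := by
    rw [e]
    have := habs.1
    linarith
  linarith

theorem Gmap_continuous (hν : 0 < ν) : Continuous (Gmap ξ α ν) :=
  continuous_iff_continuousAt.2 fun x => (hasDerivAt_Gmap (α := α) hν x).continuousAt

theorem Gmap_surjective (hν : 0 < ν) (hsmall : ∀ j, |α j| * ν ≤ 1 / 8)
    (hgap : ∀ i j : Fin k, i ≠ j → 2 * ν < |ξ i - ξ j|) :
    Function.Surjective (Gmap ξ α ν) := by
  apply (Gmap_continuous hν).surjective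
  · apply tendsto_atTop_mono (f := fun x : ℝ => x - ν)
    · intro x
      have := abs_le.1 (abs_sumbump_le (α := α) hν hsmall hgap x)
      rw [Gmap_eq_bump]
      simp only
      linarith [this.1]
    · exact tendsto_atTop_add_const_right _ (-ν) tendsto_id
  · apply tendsto_atBot_mono (f := fun x : ℝ => x + ν)
    · intro x
      have := abs_le.1 (abs_sumbump_le (α := α) hν hsmall hgap x)
      rw [Gmap_eq_bump]
      simp only
      linarith [this.2]
    · exact tendsto_atBot_add_const_right _ ν tendsto_id

theorem Ginv_eq_invFun : Ginv ξ α ν = Function.invFun (Gmap ξ α ν) := rfl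

theorem Ginv_left (hν : 0 < ν) (hsmall : ∀ j, |α j| * ν ≤ 1 / 8)
    (hgap : ∀ i j : Fin k, i ≠ j → 2 * ν < |ξ i - ξ j|) (x : ℝ) :
    Ginv ξ α ν (Gmap ξ α ν x) = x :=
  Function.leftInverse_invFun (Gmap_strictMono hν hsmall hgap).injective x

theorem Ginv_right (hν : 0 < ν) (hsmall : ∀ j, |α j| * ν ≤ 1 / 8)
    (hgap : ∀ i j : Fin k, i ≠ j → 2 * ν < |ξ i - ξ j|) (y : ℝ) :
    Gmap ξ α ν (Ginv ξ α ν y) = y :=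
  Function.rightInverse_invFun (Gmap_surjective hν hsmall hgap) y

theorem Ginv_lip (hν : 0 < ν) (hsmall : ∀ j, |α j| * ν ≤ 1 / 8)
    (hgap : ∀ i j : Fin k, i ≠ j → 2 * ν < |ξ i - ξ j|) (x y : ℝ) :
    |Ginv ξ α ν x - Ginv ξ α ν y| ≤ 2 * |x - y| := by
  have h := Gmap_lower hν hsmall hgap (Ginv ξ α ν x) (Ginv ξ α ν y)
  rw [Ginv_right hν hsmall hgap x, Ginv_right hν hsmall hgap y] at h
  linarith

theorem lipOn_Ginv (hν : 0 < ν) (hsmall : ∀ j, |α j| * ν ≤ 1 / 8)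
    (hgap : ∀ i j : Fin k, i ≠ j → 2 * ν < |ξ i - ξ j|) :
    LipOn Set.univ (Ginv ξ α ν) :=
  ⟨2, by norm_num, fun x _ y _ => Ginv_lip hν hsmall hgap x y⟩

theorem Ginv_continuous (hν : 0 < ν) (hsmall : ∀ j, |α j| * ν ≤ 1 / 8)
    (hgap : ∀ i j : Fin k, i ≠ j → 2 * ν < |ξ i - ξ j|) :
    Continuous (Ginv ξ α ν) := by
  obtain ⟨L, hL⟩ := (lipOn_Ginv hν hsmall hgap).to_lipschitzOnWith
  exact (lipschitzOnWith_univ.1 hL).continuous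

theorem Gmap_fix (hν : 0 < ν) (hgap : ∀ i j : Fin k, i ≠ j → 2 * ν < |ξ i - ξ j|)
    (i : Fin k) : Gmap ξ α ν (ξ i) = ξ i := by
  rw [Gmap_eq_bump]
  simp only
  have : ∑ j, bump ν (ξ j) (α j) (ξ i) = 0 := by
    apply Finset.sum_eq_zero
    intro j _
    by_cases hji : j = i
    · rw [hji]; exact bump_at_center
    · apply bump_eq_zero hν
      have := hgap i j (fun h => hji h.symm)
      calc ν < 2 * ν := by linarith
        _ < |ξ i - ξ j| := this
  rw [this]; ring

theorem G1f_fix (hν : 0 < ν) (hgap : ∀ i j : Fin k, i ≠ j → 2 * ν < |ξ i - ξ j|)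
    (i : Fin k) : G1f ξ α ν (ξ i) = 1 := by
  unfold G1f
  have : ∑ j, bump1 ν (ξ j) (α j) (ξ i) = 0 := by
    apply Finset.sum_eq_zero
    intro j _
    by_cases hji : j = i
    · rw [hji]; exact bump1_at_center
    · apply bump1_eq_zero hν
      have := hgap i j (fun h => hji h.symm)
      calc ν < 2 * ν := by linarith
        _ < |ξ i - ξ j| := this
  rw [this]; ring

theorem Ginv_fix (hν : 0 < ν) (hsmall : ∀ j, |α j| * ν ≤ 1 / 8)
    (hgap : ∀ i j : Fin k, i ≠ j → 2 * ν < |ξ i - ξ j|) (i : Fin k) :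
    Ginv ξ α ν (ξ i) = ξ i := by
  conv_lhs => rw [← Gmap_fix (α := α) hν hgap i]
  exact Ginv_left hν hsmall hgap (ξ i)

theorem mem_piece_iff_Gmap (hν : 0 < ν) (hsmall : ∀ j, |α j| * ν ≤ 1 / 8)
    (hgap : ∀ i j : Fin k, i ≠ j → 2 * ν < |ξ i - ξ j|) {i : Fin (k + 1)} {x : ℝ} :
    x ∈ piece ξ i ↔ Gmap ξ α ν x ∈ piece ξ i := by
  have hsm := Gmap_strictMono hν hsmall hgap
  constructor
  · rintro ⟨h1, h2⟩
    constructor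
    · intro j hj
      have := hsm (h1 j hj)
      rwa [Gmap_fix hν hgap j] at this
    · intro j hj
      have := hsm (h2 j hj)
      rwa [Gmap_fix hν hgap j] at this
  · rintro ⟨h1, h2⟩
    constructor
    · intro j hj
      have := h1 j hj
      rw [← Gmap_fix (α := α) hν hgap j] at this
      exact hsm.lt_iff_lt.1 this
    · intro j hj
      have := h2 j hj
      rw [← Gmap_fix (α := α) hν hgap j] at this
      exact hsm.lt_iff_lt.1 this

theorem Ginv_mem_piece (hν : 0 < ν) (hsmall : ∀ j, |α j| * ν ≤ 1 / 8)
    (hgap : ∀ i j : Fin k, i ≠ j → 2 * ν < |ξ i - ξ j|) {i : Fin (k + 1)} {x : ℝ} :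
    Ginv ξ α ν x ∈ piece ξ i ↔ x ∈ piece ξ i := by
  rw [mem_piece_iff_Gmap hν hsmall hgap (i := i) (x := Ginv ξ α ν x),
    Ginv_right hν hsmall hgap]

theorem hasDerivAt_Ginv (hν : 0 < ν) (hsmall : ∀ j, |α j| * ν ≤ 1 / 8)
    (hgap : ∀ i j : Fin k, i ≠ j → 2 * ν < |ξ i - ξ j|) (x : ℝ) :
    HasDerivAt (Ginv ξ α ν) (G1f ξ α ν (Ginv ξ α ν x))⁻¹ x := by
  apply HasDerivAt.of_local_left_inverse
    ((Ginv_continuous hν hsmall hgap).continuousAt)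
    (hasDerivAt_Gmap hν (Ginv ξ α ν x))
    (by
      have := G1f_pos (ξ := ξ) (α := α) hν hsmall hgap (Ginv ξ α ν x)
      intro hcon
      rw [hcon] at this
      linarith)
  filter_upwards with y
  exact Ginv_right hν hsmall hgap y

end Lemma42Inv


section Lemma42Piece
open scoped Topology

variable {k : ℕ} {ξ : Fin k → ℝ}

theorem piece_isOpen (ξ : Fin k → ℝ) (i : Fin (k + 1)) : IsOpen (piece ξ i) := by
  have e : piece ξ i = (⋂ j ∈ Finset.univ.filter (fun j : Fin k => (j : ℕ) < (i : ℕ)),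
      Set.Ioi (ξ j)) ∩ ⋂ j ∈ Finset.univ.filter (fun j : Fin k => (i : ℕ) ≤ (j : ℕ)),
      Set.Iio (ξ j) := by
    ext x
    simp only [piece, Set.mem_setOf_eq, Set.mem_inter_iff, Set.mem_iInter, Finset.mem_filter,
      Finset.mem_univ, true_and, Set.mem_Ioi, Set.mem_Iio]
  rw [e]
  apply IsOpen.inter
  · exact isOpen_biInter_finset fun j _ => isOpen_Ioi
  · exact isOpen_biInter_finset fun j _ => isOpen_Iio

theorem piece_ne_xi {i : Fin (k + 1)} {x : ℝ} (hx : x ∈ piece ξ i) (j : Fin k) : x ≠ ξ j := by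
  rcases hx with ⟨h1, h2⟩
  by_cases hj : (j : ℕ) < (i : ℕ)
  · exact (h1 j hj).ne'
  · push_neg at hj
    exact (h2 j hj).ne

theorem piece_side (ξ : Fin k → ℝ) (i : Fin (k + 1)) (j : Fin k) :
    (∀ x ∈ piece ξ i, x < ξ j) ∨ (∀ x ∈ piece ξ i, ξ j < x) := by
  by_cases hj : (j : ℕ) < (i : ℕ)
  · right; intro x hx; exact hx.1 j hj
  · left; intro x hx; push_neg at hj; exact hx.2 j hj

theorem exists_piece (hξ : StrictMono ξ) {x : ℝ} (hx : ∀ j, x ≠ ξ j) :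
    ∃ i : Fin (k + 1), x ∈ piece ξ i := by
  classical
  by_cases hS : (Finset.univ.filter (fun j : Fin k => ξ j < x)).Nonempty
  · set m := (Finset.univ.filter (fun j : Fin k => ξ j < x)).max' hS with hm
    have hmem : m ∈ Finset.univ.filter (fun j : Fin k => ξ j < x) :=
      (Finset.univ.filter (fun j : Fin k => ξ j < x)).max'_mem hS
    have hmx : ξ m < x := (Finset.mem_filter.1 hmem).2
    refine ⟨m.succ, ?_, ?_⟩
    · intro j hj
      have hj' : (j : ℕ) ≤ (m : ℕ) := by
        have : (j : ℕ) < (m : ℕ) + 1 := by simpa using hj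
        omega
      calc ξ j ≤ ξ m := hξ.monotone (by exact hj')
        _ < x := hmx
    · intro j hj
      rcases lt_or_gt_of_ne (hx j) with h | h
      · exact h
      · exfalso
        have hjS : j ∈ Finset.univ.filter (fun j : Fin k => ξ j < x) :=
          Finset.mem_filter.2 ⟨Finset.mem_univ j, h⟩
        have := Finset.le_max' _ j hjS
        rw [← hm] at this
        have h2 : (j : ℕ) ≤ (m : ℕ) := this
        have h3 : ((m.succ : Fin (k+1)) : ℕ) = (m : ℕ) + 1 := by simp
        omega
  · refine ⟨0, ?_, ?_⟩
    · intro j hj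
      simp at hj
    · intro j _
      rcases lt_or_gt_of_ne (hx j) with h | h
      · exact h
      · exfalso
        exact hS ⟨j, Finset.mem_filter.2 ⟨Finset.mem_univ j, h⟩⟩

theorem eventually_piece_left (hξ : StrictMono ξ) (i : Fin k) :
    ∀ᶠ x in 𝓝[<] (ξ i), x ∈ piece ξ i.castSucc := by
  have hA : ∀ᶠ x in 𝓝 (ξ i), ∀ j : Fin k, (j : ℕ) < (i : ℕ) → ξ j < x := by
    rw [Filter.eventually_all]
    intro j
    by_cases hj : (j : ℕ) < (i : ℕ)
    · filter_upwards [Ioi_mem_nhds (hξ (show j < i from hj))] with x hx _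
      exact hx
    · filter_upwards with x hcon
      exact absurd hcon hj
  have hA' : ∀ᶠ x in 𝓝[<] (ξ i), ∀ j : Fin k, (j : ℕ) < (i : ℕ) → ξ j < x :=
    hA.filter_mono nhdsWithin_le_nhds
  filter_upwards [hA', self_mem_nhdsWithin] with x hx1 hx2
  constructor
  · intro j hj
    apply hx1
    simpa using hj
  · intro j hj
    have hij : (i : ℕ) ≤ (j : ℕ) := by simpa using hj
    calc x < ξ i := hx2
      _ ≤ ξ j := hξ.monotone hij

theorem eventually_piece_right (hξ : StrictMono ξ) (i : Fin k) :
    ∀ᶠ x in 𝓝[>] (ξ i), x ∈ piece ξ i.succ := by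
  have hA : ∀ᶠ x in 𝓝 (ξ i), ∀ j : Fin k, ((i.succ : Fin (k+1)) : ℕ) ≤ (j : ℕ) → x < ξ j := by
    rw [Filter.eventually_all]
    intro j
    by_cases hj : ((i.succ : Fin (k+1)) : ℕ) ≤ (j : ℕ)
    · have hij : i < j := by
        have : (i : ℕ) + 1 ≤ (j : ℕ) := by simpa using hj
        exact Fin.lt_def.2 (by omega)
      filter_upwards [Iio_mem_nhds (hξ hij)] with x hx _
      exact hx
    · filter_upwards with x hcon
      exact absurd hcon hj
  have hA' : ∀ᶠ x in 𝓝[>] (ξ i), ∀ j : Fin k, ((i.succ : Fin (k+1)) : ℕ) ≤ (j : ℕ) → x < ξ j :=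
    hA.filter_mono nhdsWithin_le_nhds
  filter_upwards [hA', self_mem_nhdsWithin] with x hx1 hx2
  constructor
  · intro j hj
    have hj' : (j : ℕ) ≤ (i : ℕ) := by
      have : (j : ℕ) < (i : ℕ) + 1 := by simpa using hj
      omega
    calc ξ j ≤ ξ i := hξ.monotone hj'
      _ < x := hx2
  · intro j hj
    exact hx1 j hj

theorem xi_mem_closure_left (i : Fin k) : 𝓝[<] (ξ i) ≠ ⊥ := by
  exact (nhdsLT_neBot (ξ i)).ne'

theorem xi_mem_closure_right (i : Fin k) : 𝓝[>] (ξ i) ≠ ⊥ :=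
  (nhdsGT_neBot (ξ i)).ne'

end Lemma42Piece


section Lemma42Cpt
open scoped Topology

/-- Lipschitz + bounded + compactly supported (within radius `R`) on `s`. -/
def CptBL (s : Set ℝ) (R : ℝ) (f : ℝ → ℝ) : Prop :=
  LipOn s f ∧ (∃ M, 0 ≤ M ∧ ∀ x ∈ s, |f x| ≤ M) ∧ ∀ x ∈ s, f x ≠ 0 → |x| ≤ R

theorem LipOn.bound_of_radius {g : ℝ → ℝ} (hg : LipOn Set.univ g) {R : ℝ} (hR : 0 ≤ R) :
    ∃ B, 0 ≤ B ∧ ∀ y : ℝ, |y| ≤ R → |g y| ≤ B := by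
  obtain ⟨Lg, hLg0, hLg⟩ := hg
  refine ⟨|g 0| + Lg * R, by positivity, fun y hy => ?_⟩
  have h1 := hLg y (Set.mem_univ _) 0 (Set.mem_univ _)
  have h2 : |g y| - |g 0| ≤ |g y - g 0| := by
    have := abs_sub_abs_le_abs_sub (g y) (g 0)
    linarith
  have h3 : |y - 0| = |y| := by norm_num
  rw [h3] at h1
  nlinarith [abs_nonneg y]

theorem CptBL.mul_lip {s : Set ℝ} {R : ℝ} {f g : ℝ → ℝ} (hR : 0 ≤ R)
    (hf : CptBL s R f) (hg : LipOn Set.univ g) : CptBL s R (fun x => f x * g x) := by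
  obtain ⟨⟨Lf, hLf0, hLf⟩, ⟨M, hM0, hM⟩, hsupp⟩ := hf
  obtain ⟨B, hB0, hB⟩ := hg.bound_of_radius (by linarith : (0:ℝ) ≤ R + 1)
  obtain ⟨Lg, hLg0, hLg⟩ := hg
  refine ⟨?_, ⟨M * B, by positivity, fun x hx => ?_⟩, fun x hx hne => ?_⟩
  · apply LipOn.mul_support (Lf := Lf) (Lg := Lg) (M := M) (B := B) hLf0 hLg0 hM0 hB0 hLf hM
    · intro x hx hne y hy hxy
      apply hB
      have := hsupp x hx hne
      have h4 : |y| - |x| ≤ |y - x| := by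
        have := abs_sub_abs_le_abs_sub y x
        linarith
      rw [abs_sub_comm] at h4
      linarith
    · intro x hx _ y hy _
      exact hLg x (Set.mem_univ _) y (Set.mem_univ _)
  · show |f x * g x| ≤ M * B
    by_cases hne : f x = 0
    · rw [hne, zero_mul, abs_zero]; positivity
    · rw [abs_mul]
      have h1 := hsupp x hx hne
      have h2 := hB x (by linarith)
      exact mul_le_mul (hM x hx) h2 (abs_nonneg _) hM0
  · apply hsupp x hx
    intro hc
    apply hne
    show f x * g x = 0
    rw [hc, zero_mul]

theorem CptBL.add {s : Set ℝ} {R : ℝ} {f g : ℝ → ℝ}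
    (hf : CptBL s R f) (hg : CptBL s R g) : CptBL s R (fun x => f x + g x) := by
  obtain ⟨hf1, ⟨M, hM0, hM⟩, hf3⟩ := hf
  obtain ⟨hg1, ⟨N, hN0, hN⟩, hg3⟩ := hg
  refine ⟨hf1.add hg1, ⟨M + N, by linarith, fun x hx => ?_⟩, fun x hx hne => ?_⟩
  · calc |f x + g x| ≤ |f x| + |g x| := abs_add_le _ _
      _ ≤ M + N := add_le_add (hM x hx) (hN x hx)
  · by_cases h1 : f x = 0
    · apply hg3 x hx
      intro h2
      apply hne
      show f x + g x = 0
      rw [h1, h2, add_zero]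
    · exact hf3 x hx h1

theorem CptBL.const_mul {s : Set ℝ} {R : ℝ} {f : ℝ → ℝ} (c : ℝ)
    (hf : CptBL s R f) : CptBL s R (fun x => c * f x) := by
  obtain ⟨hf1, ⟨M, hM0, hM⟩, hf3⟩ := hf
  refine ⟨hf1.const_mul c, ⟨|c| * M, by positivity, fun x hx => ?_⟩, fun x hx hne => ?_⟩
  · rw [abs_mul]
    exact mul_le_mul_of_nonneg_left (hM x hx) (abs_nonneg c)
  · apply hf3 x hx
    intro hc
    apply hne
    show c * f x = 0
    rw [hc, mul_zero]

theorem CptBL.mono {s t : Set ℝ} {R : ℝ} {f : ℝ → ℝ} (hf : CptBL t R f) (h : s ⊆ t) :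
    CptBL s R f := by
  obtain ⟨hf1, ⟨M, hM0, hM⟩, hf3⟩ := hf
  exact ⟨hf1.mono h, ⟨M, hM0, fun x hx => hM x (h hx)⟩, fun x hx => hf3 x (h hx)⟩

theorem LipOn.continuous {f : ℝ → ℝ} (hf : LipOn Set.univ f) : Continuous f := by
  obtain ⟨L, hL⟩ := hf.to_lipschitzOnWith
  exact (lipschitzOnWith_univ.1 hL).continuous

theorem LipOn.continuousOn {s : Set ℝ} {f : ℝ → ℝ} (hf : LipOn s f) : ContinuousOn f s := by
  obtain ⟨L, hL⟩ := hf.to_lipschitzOnWith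
  exact hL.continuousOn

end Lemma42Cpt

open scoped Topology

/-- Lemma 4.2: the transformed coefficients `μ̃` and `σ̃` satisfy (μ1), (μ2) and
(σ1), (σ2) respectively, and `μ̃` is continuous. -/
theorem tilde_coefficients_assumptions
    (b s : ℝ → ℝ) (k : ℕ) (hk : 0 < k) (ξ : Fin k → ℝ) (hξ : StrictMono ξ)
    (hb1 : PiecewiseLipschitz ξ b) (hb2 : PiecewiseC1Lipschitz ξ b)
    (hs1 : ∃ L : ℝ≥0, LipschitzWith L s) (hs0 : ∀ i, s (ξ i) ≠ 0)
    (hs2 : PiecewiseC1Lipschitz ξ s)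
    (ν : ℝ) (hν : 0 < ν) (hν' : ENNReal.ofReal ν < rho ξ (alphaCoef b s ξ)) :
    PiecewiseLipschitz ξ (tildeDrift b s ξ ν) ∧
    PiecewiseC1Lipschitz ξ (tildeDrift b s ξ ν) ∧
    ((∃ L : ℝ≥0, LipschitzWith L (tildeDiff b s ξ ν)) ∧ ∀ i, tildeDiff b s ξ ν (ξ i) ≠ 0) ∧
    PiecewiseC1Lipschitz ξ (tildeDiff b s ξ ν) ∧
    Continuous (tildeDrift b s ξ ν) := by
  classical
  set α := alphaCoef b s ξ with hα
  -- small coefficients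
  have hsmall : ∀ j, |α j| * ν ≤ 1 / 8 := by
    intro j
    by_cases hz : α j = 0
    · rw [hz, abs_zero, zero_mul]; norm_num
    · have h1 : rho ξ α ≤ ENNReal.ofReal (1 / (8 * |α j|)) := by
        refine le_trans inf_le_left (le_trans (iInf_le _ j) ?_)
        rw [if_neg hz]
      have h2 : ENNReal.ofReal ν < ENNReal.ofReal (1 / (8 * |α j|)) := lt_of_lt_of_le hν' h1
      have hpos : (0:ℝ) < 1 / (8 * |α j|) := by
        have : 0 < |α j| := abs_pos.2 hz
        positivity
      have h3 : ν < 1 / (8 * |α j|) := by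
        rwa [ENNReal.ofReal_lt_ofReal_iff hpos] at h2
      have h4 : 0 < |α j| := abs_pos.2 hz
      rw [lt_div_iff₀ (by positivity : (0:ℝ) < 8 * |α j|)] at h3
      nlinarith
  -- gaps
  have hgap : ∀ i j : Fin k, i ≠ j → 2 * ν < |ξ i - ξ j| := by
    have key : ∀ i j : Fin k, (i : ℕ) < (j : ℕ) → 2 * ν < ξ j - ξ i := by
      intro i j hij
      have hik : (i : ℕ) + 1 < k := by
        have := j.isLt
        omega
      set i' : Fin k := ⟨(i : ℕ) + 1, hik⟩ with hi'
      have h1 : rho ξ α ≤ ENNReal.ofReal ((ξ i' - ξ i) / 2) := by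
        refine le_trans inf_le_right (le_trans (iInf_le _ i) (le_trans (iInf_le _ i') ?_))
        rw [if_pos rfl]
      have hii' : i < i' := by
        rw [Fin.lt_def]; simp [hi']
      have hpos : (0:ℝ) < (ξ i' - ξ i) / 2 := by
        have := hξ hii'
        linarith
      have h2 : ν < (ξ i' - ξ i) / 2 := by
        have := lt_of_lt_of_le hν' h1
        rwa [ENNReal.ofReal_lt_ofReal_iff hpos] at this
      have h3 : ξ i' ≤ ξ j := by
        apply hξ.monotone
        show (i' : ℕ) ≤ (j : ℕ)
        simp only [hi']
        omega
      linarith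
    intro i j hij
    rcases Nat.lt_or_ge (i : ℕ) (j : ℕ) with h | h
    · have := key i j h
      have hlt : ξ i < ξ j := hξ (Fin.lt_def.2 h)
      rw [abs_of_neg (by linarith : ξ i - ξ j < 0)]
      linarith
    · have hne : (j : ℕ) < (i : ℕ) := by
        rcases Nat.lt_or_ge (j : ℕ) (i : ℕ) with h' | h'
        · exact h'
        · exfalso; exact hij (Fin.ext (by omega))
      have := key j i hne
      have hlt : ξ j < ξ i := hξ (Fin.lt_def.2 hne)
      rw [abs_of_pos (by linarith : 0 < ξ i - ξ j)]
      linarith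
  -- radius
  set R : ℝ := ν + ∑ j, |ξ j| with hRdef
  have hR0 : 0 ≤ R := by
    rw [hRdef]
    have : 0 ≤ ∑ j, |ξ j| := Finset.sum_nonneg fun j _ => abs_nonneg _
    linarith
  have hnear : ∀ (x : ℝ) (j : Fin k), |x - ξ j| ≤ ν → |x| ≤ R := by
    intro x j hx
    have h1 : |ξ j| ≤ ∑ j', |ξ j'| :=
      Finset.single_le_sum (fun j' _ => abs_nonneg (ξ j')) (Finset.mem_univ j)
    have h2 : |x| - |ξ j| ≤ |x - ξ j| := by
      have := abs_sub_abs_le_abs_sub x (ξ j)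
      linarith
    rw [hRdef]
    linarith
  have hfar : ∀ x : ℝ, ¬ |x| ≤ R → ∀ j, ν < |x - ξ j| := by
    intro x hx j
    by_contra hc
    push_neg at hc
    exact hx (hnear x j hc)
  -- derivative of G
  have hderivG : deriv (Gmap ξ α ν) = G1f ξ α ν :=
    funext fun x => (hasDerivAt_Gmap hν x).deriv
  -- extensions of b and the derivatives
  have hbe0 : ∀ i, ∃ g : ℝ → ℝ, LipOn Set.univ g ∧ ∀ x ∈ piece ξ i, b x = g x := by
    intro i
    obtain ⟨L, hL⟩ := hb1 i
    obtain ⟨g, hg1, hg2⟩ := hL.extend_real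
    exact ⟨g, LipschitzWith.toLipOn hg1, fun x hx => hg2 hx⟩
  choose be hbeL hbeE using hbe0
  choose bd0 Lb2 hbd0 hbd0L using hb2
  have hbd1 : ∀ i, ∃ g : ℝ → ℝ, LipOn Set.univ g ∧ ∀ x ∈ piece ξ i, bd0 i x = g x := by
    intro i
    obtain ⟨g, hg1, hg2⟩ := (hbd0L i).extend_real
    exact ⟨g, LipschitzWith.toLipOn hg1, fun x hx => hg2 hx⟩
  choose bd hbdL hbdE using hbd1
  choose sd0 Ls2 hsd0 hsd0L using hs2
  have hsd1 : ∀ i, ∃ g : ℝ → ℝ, LipOn Set.univ g ∧ ∀ x ∈ piece ξ i, sd0 i x = g x := by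
    intro i
    obtain ⟨g, hg1, hg2⟩ := (hsd0L i).extend_real
    exact ⟨g, LipschitzWith.toLipOn hg1, fun x hx => hg2 hx⟩
  choose sd hsdL hsdE using hsd1
  obtain ⟨Ls, hLs⟩ := hs1
  have hsLip : LipOn Set.univ s := LipschitzWith.toLipOn hLs
  -- compact bounded Lipschitz packages
  have hG2cpt : ∀ i : Fin (k + 1), CptBL (piece ξ i) R (G2f ξ α ν) := by
    intro i
    refine ⟨lipOn_G2f hν (piece_side ξ i), ⟨8 / ν, by positivity,
      fun x _ => abs_G2f_le hν hsmall hgap x⟩, fun x _ hne => ?_⟩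
    by_contra h
    exact hne (G2f_support hν (hfar x h))
  have hG3cpt : ∀ i : Fin (k + 1), CptBL (piece ξ i) R (G3f ξ α ν) := by
    intro i
    refine ⟨lipOn_G3f hν (piece_side ξ i), ⟨62 / ν ^ 2, by positivity,
      fun x _ => abs_G3f_le hν hsmall hgap x⟩, fun x _ hne => ?_⟩
    by_contra h
    exact hne (G3f_support hν (hfar x h))
  have hG1m1 : ∀ t : Set ℝ, CptBL t R (fun x => G1f ξ α ν x - 1) := by
    intro t
    refine ⟨?_, ⟨1 / 2, by norm_num, fun x _ => abs_G1f_sub_one_le hν hsmall hgap x⟩,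
      fun x _ hne => ?_⟩
    · apply LipOn.congr (g := fun x => G1f ξ α ν x + (-1)) (fun x _ => by ring)
      exact ((lipOn_G1f hν).mono (Set.subset_univ t)).add (LipOn.const t (-1))
    · by_contra h
      exact hne (G1f_sub_one_support hν (hfar x h))
  have hG1invLip : LipOn Set.univ (fun x => (G1f ξ α ν x)⁻¹) :=
    LipOn.inv (by norm_num : (0:ℝ) < 1 / 2) (fun x _ => G1f_pos hν hsmall hgap x) (lipOn_G1f hν)
  have hGinvLip : LipOn Set.univ (Ginv ξ α ν) := lipOn_Ginv hν hsmall hgap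
  have hGinvMaps : ∀ i : Fin (k + 1), ∀ x ∈ piece ξ i, Ginv ξ α ν x ∈ piece ξ i :=
    fun i x hx => (Ginv_mem_piece hν hsmall hgap).2 hx
  -- ======== tildeDiff : global Lipschitz and nonvanishing ========
  have hdiff_eq : tildeDiff b s ξ ν = fun x => G1f ξ α ν (Ginv ξ α ν x) * s (Ginv ξ α ν x) := by
    funext x
    unfold tildeDiff
    rw [← hα, hderivG]
  have hG1s : LipOn Set.univ (fun y => G1f ξ α ν y * s y) := by
    apply LipOn.congr (g := fun y => s y + (G1f ξ α ν y - 1) * s y) (fun y _ => by ring)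
    exact hsLip.add ((hG1m1 Set.univ).mul_lip hR0 hsLip).1
  have hdiffLip : LipOn Set.univ (tildeDiff b s ξ ν) := by
    rw [hdiff_eq]
    exact hG1s.comp hGinvLip (fun x _ => Set.mem_univ _)
  have hdiff1 : ∃ L : ℝ≥0, LipschitzWith L (tildeDiff b s ξ ν) := by
    obtain ⟨L, hL⟩ := hdiffLip.to_lipschitzOnWith
    exact ⟨L, lipschitzOnWith_univ.1 hL⟩
  have hdiff2 : ∀ i, tildeDiff b s ξ ν (ξ i) ≠ 0 := by
    intro i
    rw [hdiff_eq]
    simp only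
    rw [Ginv_fix hν hsmall hgap i, G1f_fix hν hgap i, one_mul]
    exact hs0 i
  -- ======== the drift function H with G-composition ========
  set Hfun : ℝ → ℝ :=
    fun y => deriv (Gmap ξ α ν) y * b y + 1 / 2 * GsecondExt b s ξ ν y * s y ^ 2 with hHfun
  have hdrift : tildeDrift b s ξ ν = fun x => Hfun (Ginv ξ α ν x) := rfl
  have hGsec_piece : ∀ (i : Fin (k + 1)), ∀ x ∈ piece ξ i,
      GsecondExt b s ξ ν x = G2f ξ α ν x := by
    intro i x hx
    have hne : ¬ ∃ j : Fin k, ξ j = x := by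
      rintro ⟨j, hj⟩
      exact (piece_ne_xi hx j) hj.symm
    rw [GsecondExt, dif_neg hne, hderivG]
    exact (hasDerivAt_G1f hν (fun j => piece_ne_xi hx j)).deriv
  have hGsec_xi : ∀ i : Fin k, GsecondExt b s ξ ν (ξ i)
      = 2 * α i + 2 * (Function.rightLim b (ξ i) - b (ξ i)) / s (ξ i) ^ 2 := by
    intro i
    have hex : ∃ j : Fin k, ξ j = ξ i := ⟨i, rfl⟩
    rw [GsecondExt, dif_pos hex]
    have hch : hex.choose = i := hξ.injective hex.choose_spec
    rw [hch, ← hα]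
  -- one-sided limits of b
  have hLtend : ∀ i : Fin k, Tendsto b (𝓝[<] ξ i) (𝓝 (be i.castSucc (ξ i))) := by
    intro i
    have hcont := (hbeL i.castSucc).continuous
    apply Tendsto.congr' ?_ ((hcont.tendsto (ξ i)).mono_left nhdsWithin_le_nhds)
    filter_upwards [eventually_piece_left hξ i] with x hx
    exact (hbeE i.castSucc x hx).symm
  have hRtend : ∀ i : Fin k, Tendsto b (𝓝[>] ξ i) (𝓝 (be i.succ (ξ i))) := by
    intro i
    have hcont := (hbeL i.succ).continuous
    apply Tendsto.congr' ?_ ((hcont.tendsto (ξ i)).mono_left nhdsWithin_le_nhds)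
    filter_upwards [eventually_piece_right hξ i] with x hx
    exact (hbeE i.succ x hx).symm
  have hllim : ∀ i : Fin k, Function.leftLim b (ξ i) = be i.castSucc (ξ i) :=
    fun i => leftLim_eq_of_tendsto (hLtend i)
  have hrlim : ∀ i : Fin k, Function.rightLim b (ξ i) = be i.succ (ξ i) :=
    fun i => rightLim_eq_of_tendsto (hRtend i)
  have hs2ne : ∀ i : Fin k, s (ξ i) ^ 2 ≠ 0 := fun i => pow_ne_zero 2 (hs0 i)
  have hαs : ∀ i : Fin k, 2 * (α i * s (ξ i) ^ 2)
      = be i.castSucc (ξ i) - be i.succ (ξ i) := by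
    intro i
    have : α i = (Function.leftLim b (ξ i) - Function.rightLim b (ξ i)) / (2 * s (ξ i) ^ 2) := rfl
    rw [this, hllim i, hrlim i]
    field_simp [hs0 i]
  -- limits of G2f at the interface points
  have hG2left : ∀ i : Fin k, Tendsto (G2f ξ α ν) (𝓝[<] ξ i) (𝓝 (-(2 * α i))) := by
    intro i
    have hterm : ∀ j : Fin k, Tendsto (fun x => bump2 ν (ξ j) (α j) x) (𝓝[<] ξ i)
        (𝓝 (if j = i then -(2 * α j) else 0)) := by
      intro j
      by_cases hji : j = i
      · subst hji
        rw [if_pos rfl]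
        have h := tendsto_bump2_left (z := ξ j) (a := α j) hν
        have he : (-2 : ℝ) * α j = -(2 * α j) := by ring
        rwa [he] at h
      · rw [if_neg hji]
        have hz : ν < |ξ i - ξ j| := lt_trans (by linarith) (hgap i j (fun h => hji h.symm))
        have hev := bump2_eventually_zero (a := α j) hν hz
        have hev' : (fun x => bump2 ν (ξ j) (α j) x) =ᶠ[𝓝[<] ξ i] (fun _ => (0:ℝ)) :=
          hev.filter_mono nhdsWithin_le_nhds
        exact Tendsto.congr' hev'.symm tendsto_const_nhds
    have hsum := tendsto_finset_sum Finset.univ (fun j (_ : j ∈ Finset.univ) => hterm j)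
    have hL : ∑ j, (if j = i then -(2 * α j) else 0) = -(2 * α i) := by
      rw [Finset.sum_eq_single i]
      · rw [if_pos rfl]
      · intro j _ hj
        rw [if_neg hj]
      · intro h
        exact absurd (Finset.mem_univ i) h
    rw [hL] at hsum
    exact hsum
  have hG2right : ∀ i : Fin k, Tendsto (G2f ξ α ν) (𝓝[>] ξ i) (𝓝 (2 * α i)) := by
    intro i
    have hterm : ∀ j : Fin k, Tendsto (fun x => bump2 ν (ξ j) (α j) x) (𝓝[>] ξ i)
        (𝓝 (if j = i then 2 * α j else 0)) := by
      intro j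
      by_cases hji : j = i
      · subst hji
        rw [if_pos rfl]
        exact tendsto_bump2_right (z := ξ j) (a := α j) hν
      · rw [if_neg hji]
        have hz : ν < |ξ i - ξ j| := lt_trans (by linarith) (hgap i j (fun h => hji h.symm))
        have hev := bump2_eventually_zero (a := α j) hν hz
        have hev' : (fun x => bump2 ν (ξ j) (α j) x) =ᶠ[𝓝[>] ξ i] (fun _ => (0:ℝ)) :=
          hev.filter_mono nhdsWithin_le_nhds
        exact Tendsto.congr' hev'.symm tendsto_const_nhds
    have hsum := tendsto_finset_sum Finset.univ (fun j (_ : j ∈ Finset.univ) => hterm j)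
    have hL : ∑ j, (if j = i then 2 * α j else 0) = 2 * α i := by
      rw [Finset.sum_eq_single i]
      · rw [if_pos rfl]
      · intro j _ hj
        rw [if_neg hj]
      · intro h
        exact absurd (Finset.mem_univ i) h
    rw [hL] at hsum
    exact hsum
  -- rewriting of Hfun using G1f
  have hH2 : Hfun = fun y => G1f ξ α ν y * b y + 1 / 2 * GsecondExt b s ξ ν y * s y ^ 2 := by
    rw [hHfun, hderivG]
  -- continuity of Hfun
  have hG1cont : Continuous (G1f ξ α ν) := (lipOn_G1f hν).continuous
  have hscont : Continuous s := hLs.continuous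
  have hHcontAt : ∀ y : ℝ, ContinuousAt Hfun y := by
    intro y
    by_cases hy : ∃ j : Fin k, ξ j = y
    · obtain ⟨i, rfl⟩ := hy
      -- value of Hfun at ξ i
      have hval : Hfun (ξ i) = be i.succ (ξ i) + α i * s (ξ i) ^ 2 := by
        rw [hH2]
        simp only
        rw [G1f_fix hν hgap i, hGsec_xi i, hrlim i, one_mul]
        field_simp [hs0 i]
        ring
      have hvalL : Hfun (ξ i) = be i.castSucc (ξ i) - α i * s (ξ i) ^ 2 := by
        rw [hval]
        have := hαs i
        linarith
      rw [continuousAt_iff_continuous_left'_right']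
      constructor
      · -- left
        show Tendsto Hfun (𝓝[<] ξ i) (𝓝 (Hfun (ξ i)))
        have hTG1 : Tendsto (G1f ξ α ν) (𝓝[<] ξ i) (𝓝 1) := by
          have := (hG1cont.tendsto (ξ i)).mono_left (nhdsWithin_le_nhds (s := Set.Iio (ξ i)))
          rwa [G1f_fix hν hgap i] at this
        have hTb := hLtend i
        have hTGs : Tendsto (GsecondExt b s ξ ν) (𝓝[<] ξ i) (𝓝 (-(2 * α i))) := by
          apply Tendsto.congr' ?_ (hG2left i)
          filter_upwards [eventually_piece_left hξ i] with x hx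
          exact (hGsec_piece i.castSucc x hx).symm
        have hTs2 : Tendsto (fun y => s y ^ 2) (𝓝[<] ξ i) (𝓝 (s (ξ i) ^ 2)) :=
          ((hscont.pow 2).tendsto (ξ i)).mono_left nhdsWithin_le_nhds
        have hT := (hTG1.mul hTb).add (((tendsto_const_nhds (x := (1:ℝ)/2)).mul hTGs).mul hTs2)
        rw [hvalL]
        have h5 : (1:ℝ) * be i.castSucc (ξ i) + 1 / 2 * -(2 * α i) * s (ξ i) ^ 2
            = be i.castSucc (ξ i) - α i * s (ξ i) ^ 2 := by ring
        rw [← h5, hH2]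
        exact hT
      · -- right
        show Tendsto Hfun (𝓝[>] ξ i) (𝓝 (Hfun (ξ i)))
        have hTG1 : Tendsto (G1f ξ α ν) (𝓝[>] ξ i) (𝓝 1) := by
          have := (hG1cont.tendsto (ξ i)).mono_left (nhdsWithin_le_nhds (s := Set.Ioi (ξ i)))
          rwa [G1f_fix hν hgap i] at this
        have hTb := hRtend i
        have hTGs : Tendsto (GsecondExt b s ξ ν) (𝓝[>] ξ i) (𝓝 (2 * α i)) := by
          apply Tendsto.congr' ?_ (hG2right i)
          filter_upwards [eventually_piece_right hξ i] with x hx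
          exact (hGsec_piece i.succ x hx).symm
        have hTs2 : Tendsto (fun y => s y ^ 2) (𝓝[>] ξ i) (𝓝 (s (ξ i) ^ 2)) :=
          ((hscont.pow 2).tendsto (ξ i)).mono_left nhdsWithin_le_nhds
        have hT := (hTG1.mul hTb).add (((tendsto_const_nhds (x := (1:ℝ)/2)).mul hTGs).mul hTs2)
        rw [hval]
        have h5 : (1:ℝ) * be i.succ (ξ i) + 1 / 2 * (2 * α i) * s (ξ i) ^ 2
            = be i.succ (ξ i) + α i * s (ξ i) ^ 2 := by ring
        rw [← h5, hH2]
        exact hT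
    · push_neg at hy
      obtain ⟨i, hpi⟩ := exists_piece hξ (fun j h => (hy j) h.symm)
      have hopen := (piece_isOpen ξ i).mem_nhds hpi
      have h1 : ContinuousAt (fun w => deriv (Gmap ξ α ν) w) y := by
        rw [hderivG]
        exact hG1cont.continuousAt
      have h2 : ContinuousAt b y := by
        have hT : Tendsto b (𝓝 y) (𝓝 (be i y)) := by
          apply Tendsto.congr' ?_ ((hbeL i).continuous.tendsto y)
          filter_upwards [hopen] with w hw
          exact (hbeE i w hw).symm
        unfold ContinuousAt
        rw [hbeE i y hpi]
        exact hT
      have h3 : ContinuousAt (GsecondExt b s ξ ν) y := by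
        have hG2ca : ContinuousAt (G2f ξ α ν) y :=
          ((lipOn_G2f hν (piece_side ξ i)).continuousOn).continuousAt hopen
        have hT : Tendsto (GsecondExt b s ξ ν) (𝓝 y) (𝓝 (G2f ξ α ν y)) := by
          apply Tendsto.congr' ?_ hG2ca
          filter_upwards [hopen] with w hw
          exact (hGsec_piece i w hw).symm
        unfold ContinuousAt
        rw [hGsec_piece i y hpi]
        exact hT
      have h4 : ContinuousAt (fun y => s y ^ 2) y := (hscont.pow 2).continuousAt
      exact (h1.mul h2).add ((continuousAt_const.mul h3).mul h4)
  -- ======== Lipschitz of Hfun on pieces ========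
  have hHlipOn : ∀ i : Fin (k + 1), LipOn (piece ξ i) Hfun := by
    intro i
    have h1 : LipOn (piece ξ i) (be i) := (hbeL i).mono (Set.subset_univ _)
    have h2 : LipOn (piece ξ i) (fun y => (G1f ξ α ν y - 1) * be i y) :=
      ((hG1m1 (piece ξ i)).mul_lip hR0 (hbeL i)).1
    have h3 : LipOn (piece ξ i) (fun y => 1 / 2 * (G2f ξ α ν y * s y * s y)) := by
      have := (((hG2cpt i).mul_lip hR0 hsLip).mul_lip hR0 hsLip).1
      exact this.const_mul (1 / 2)
    apply LipOn.congr (g := fun y => (be i y + (G1f ξ α ν y - 1) * be i y)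
      + 1 / 2 * (G2f ξ α ν y * s y * s y)) ?_ ((h1.add h2).add h3)
    intro y hy
    rw [hH2]
    simp only
    rw [hGsec_piece i y hy, hbeE i y hy]
    ring
  refine ⟨?_, ?_, ⟨hdiff1, hdiff2⟩, ?_, ?_⟩
  · -- PiecewiseLipschitz of the drift
    intro i
    apply LipOn.to_lipschitzOnWith
    rw [hdrift]
    exact (hHlipOn i).comp (hGinvLip.mono (Set.subset_univ _)) (hGinvMaps i)
  · -- PiecewiseC1Lipschitz of the drift
    intro i
    set D' : ℝ → ℝ := fun y => bd i y + (G2f ξ α ν y * be i y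
      + 1 / 2 * (G3f ξ α ν y * s y * s y) + G2f ξ α ν y * s y * sd i y)
        * (G1f ξ α ν y)⁻¹ with hD'
    have hlip : LipOn (piece ξ i) (fun x => D' (Ginv ξ α ν x)) := by
      have c1 : CptBL (piece ξ i) R (fun y => G2f ξ α ν y * be i y) :=
        (hG2cpt i).mul_lip hR0 (hbeL i)
      have c2 : CptBL (piece ξ i) R (fun y => 1 / 2 * (G3f ξ α ν y * s y * s y)) :=
        (((hG3cpt i).mul_lip hR0 hsLip).mul_lip hR0 hsLip).const_mul (1 / 2)
      have c3 : CptBL (piece ξ i) R (fun y => G2f ξ α ν y * s y * sd i y) :=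
        ((hG2cpt i).mul_lip hR0 hsLip).mul_lip hR0 (hsdL i)
      have hinner : CptBL (piece ξ i) R (fun y => G2f ξ α ν y * be i y
          + 1 / 2 * (G3f ξ α ν y * s y * s y) + G2f ξ α ν y * s y * sd i y) :=
        (c1.add c2).add c3
      have hD'lip : LipOn (piece ξ i) D' := by
        rw [hD']
        exact ((hbdL i).mono (Set.subset_univ _)).add ((hinner.mul_lip hR0 hG1invLip).1)
      exact hD'lip.comp (hGinvLip.mono (Set.subset_univ _)) (hGinvMaps i)
    obtain ⟨L, hL⟩ := hlip.to_lipschitzOnWith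
    refine ⟨fun x => D' (Ginv ξ α ν x), L, ?_, hL⟩
    intro x hx
    have hy : Ginv ξ α ν x ∈ piece ξ i := hGinvMaps i x hx
    set y := Ginv ξ α ν x with hydef
    have hyne : ∀ j, y ≠ ξ j := fun j => piece_ne_xi hy j
    have hG1y : G1f ξ α ν y ≠ 0 := by
      have := G1f_pos (ξ := ξ) (α := α) hν hsmall hgap y
      intro hc; rw [hc] at this; linarith
    have hb' : HasDerivAt b (bd0 i y) y := hbd0 i y hy
    have hs' : HasDerivAt s (sd0 i y) y := hsd0 i y hy
    have hG1d : HasDerivAt (G1f ξ α ν) (G2f ξ α ν y) y := hasDerivAt_G1f hν hyne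
    have hG2d : HasDerivAt (G2f ξ α ν) (G3f ξ α ν y) y := hasDerivAt_G2f hν hyne
    have hHloc : HasDerivAt (fun w => G1f ξ α ν w * b w + 1 / 2 * G2f ξ α ν w * s w ^ 2)
        (G2f ξ α ν y * b y + G1f ξ α ν y * bd0 i y
          + (1 / 2 * G3f ξ α ν y * s y ^ 2
            + 1 / 2 * G2f ξ α ν y * (2 * s y * sd0 i y))) y := by
      have h := (hG1d.mul hb').add ((hG2d.const_mul ((1:ℝ)/2)).mul (hs'.pow 2))
      refine h.congr_deriv ?_
      push_cast
      simp only [Pi.pow_apply]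
      ring
    have hHev : Hfun =ᶠ[𝓝 y]
        (fun w => G1f ξ α ν w * b w + 1 / 2 * G2f ξ α ν w * s w ^ 2) := by
      filter_upwards [(piece_isOpen ξ i).mem_nhds hy] with w hw
      rw [hH2]
      simp only
      rw [hGsec_piece i w hw]
    have hHder := hHloc.congr_of_eventuallyEq hHev
    have hGinvd : HasDerivAt (Ginv ξ α ν) (G1f ξ α ν y)⁻¹ x := by
      have h := hasDerivAt_Ginv (ξ := ξ) (α := α) hν hsmall hgap x
      rwa [← hydef] at h
    have hder2 := hHder.comp x hGinvd
    have hshow : HasDerivAt (tildeDrift b s ξ ν)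
        ((G2f ξ α ν y * b y + G1f ξ α ν y * bd0 i y
          + (1 / 2 * G3f ξ α ν y * s y ^ 2
            + 1 / 2 * G2f ξ α ν y * (2 * s y * sd0 i y))) * (G1f ξ α ν y)⁻¹) x := by
      rw [hdrift]
      exact hder2
    convert hshow using 1
    show D' (Ginv ξ α ν x) = _
    rw [← hydef]
    rw [hD']
    simp only
    rw [← hbdE i y hy, ← hsdE i y hy, ← hbeE i y hy]
    field_simp
    ring
  · -- PiecewiseC1Lipschitz of the diffusion
    intro i
    set D2 : ℝ → ℝ := fun y => sd i y + G2f ξ α ν y * s y * (G1f ξ α ν y)⁻¹ with hD2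
    have hlip : LipOn (piece ξ i) (fun x => D2 (Ginv ξ α ν x)) := by
      have hinner := (((hG2cpt i).mul_lip hR0 hsLip).mul_lip hR0 hG1invLip).1
      have hD2lip : LipOn (piece ξ i) D2 := by
        rw [hD2]
        exact ((hsdL i).mono (Set.subset_univ _)).add hinner
      exact hD2lip.comp (hGinvLip.mono (Set.subset_univ _)) (hGinvMaps i)
    obtain ⟨L, hL⟩ := hlip.to_lipschitzOnWith
    refine ⟨fun x => D2 (Ginv ξ α ν x), L, ?_, hL⟩
    intro x hx
    have hy : Ginv ξ α ν x ∈ piece ξ i := hGinvMaps i x hx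
    set y := Ginv ξ α ν x with hydef
    have hyne : ∀ j, y ≠ ξ j := fun j => piece_ne_xi hy j
    have hG1y : G1f ξ α ν y ≠ 0 := by
      have := G1f_pos (ξ := ξ) (α := α) hν hsmall hgap y
      intro hc; rw [hc] at this; linarith
    have hs' : HasDerivAt s (sd0 i y) y := hsd0 i y hy
    have hG1d : HasDerivAt (G1f ξ α ν) (G2f ξ α ν y) y := hasDerivAt_G1f hν hyne
    have hloc : HasDerivAt (fun w => G1f ξ α ν w * s w)
        (G2f ξ α ν y * s y + G1f ξ α ν y * sd0 i y) y := hG1d.mul hs'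
    have hGinvd : HasDerivAt (Ginv ξ α ν) (G1f ξ α ν y)⁻¹ x := by
      have h := hasDerivAt_Ginv (ξ := ξ) (α := α) hν hsmall hgap x
      rwa [← hydef] at h
    have hder2 := hloc.comp x hGinvd
    have hshow : HasDerivAt (tildeDiff b s ξ ν)
        ((G2f ξ α ν y * s y + G1f ξ α ν y * sd0 i y) * (G1f ξ α ν y)⁻¹) x := by
      rw [hdiff_eq]
      exact hder2
    convert hshow using 1
    show D2 (Ginv ξ α ν x) = _
    rw [← hydef]
    rw [hD2]
    simp only
    rw [← hsdE i y hy]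
    field_simp
    ring
  · -- continuity of the drift
    rw [hdrift]
    have hHcont : Continuous Hfun := continuous_iff_continuousAt.2 hHcontAt
    exact hHcont.comp (Ginv_continuous hν hsmall hgap)

end AdaptiveQM
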